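/- arXiv:math/0011063 — 2 statements merged into one kernel-verified Lean document; each statement's English description precedes it below -/
import Mathlib

section
/- Finite approximation: for every compact quantum metric space (A,L) and every ε > 0 there is a compact quantum metric space (B,L_B) with B of finite vector-space dimension and dist_q(A,B) < ε; moreover (B,L_B) can be taken to be a quotient of (A,L), that is, there is a surjective morphism π : A → B with L_B the quotient seminorm of L. -/
open scoped ENNReal NNReal
open Topology

/-- An order-unit space in the sense of Kadison: a partially ordered real vector
space with a positive order unit `e` satisfying the order-unit property and the
Archimedean property. -/
structure OrderUnitSpace : Type 1 where
  carrier : Type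
  [toAddCommGroup : AddCommGroup carrier]
  [toModule : Module ℝ carrier]
  [toPartialOrder : PartialOrder carrier]
  add_le_add_left' : ∀ a b : carrier, a ≤ b → ∀ c : carrier, c + a ≤ c + b
  smul_nonneg' : ∀ (r : ℝ) (a : carrier), 0 ≤ r → 0 ≤ a → 0 ≤ r • a
  e : carrier
  e_nonneg : 0 ≤ e
  orderUnit : ∀ a : carrier, ∃ r : ℝ, a ≤ r • e
  arch : ∀ a : carrier, (∀ r : ℝ, 0 < r → a ≤ r • e) → a ≤ 0

attribute [instance] OrderUnitSpace.toAddCommGroup OrderUnitSpace.toModule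
  OrderUnitSpace.toPartialOrder

/-- The topology generated by the open balls of a distance function. -/
def ballTopology {S : Type*} (ρ : S → S → ℝ≥0∞) : TopologicalSpace S :=
  TopologicalSpace.generateFrom
    {U : Set S | ∃ (μ : S) (ε : ℝ≥0∞), 0 < ε ∧ U = {ν | ρ μ ν < ε}}

/-- The quotient seminorm of `L` along the surjection `π`. -/
noncomputable def quotientSeminorm {α β : Type*} (π : α → β) (L : α → ℝ) (b : β) : ℝ :=
  sInf {r : ℝ | ∃ a, π a = b ∧ L a = r}

/-- `L` induces `LB` via `π`, i.e. `LB` is the quotient seminorm of `L` for `π`. -/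
def Induces {α β : Type*} (π : α → β) (L : α → ℝ) (LB : β → ℝ) : Prop :=
  ∀ b, LB b = quotientSeminorm π L b

/-- Hausdorff distance between two subsets with respect to a distance function. -/
noncomputable def hausdorffDistWith {S : Type*} (ρ : S → S → ℝ≥0∞) (T U : Set S) : ℝ≥0∞ :=
  max (⨆ t ∈ T, ⨅ u ∈ U, ρ t u) (⨆ u ∈ U, ⨅ t ∈ T, ρ t u)

namespace OrderUnitSpace

variable (A B : OrderUnitSpace)

theorem le_of_sub_nonneg'' {x y : A.carrier} (h : 0 ≤ y - x) : x ≤ y := by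
  have h2 := A.add_le_add_left' 0 (y - x) h x
  have h3 : x + (y - x) = y := by abel
  rw [add_zero, h3] at h2
  exact h2

theorem smul_e_mono {r s : ℝ} (h : r ≤ s) : r • A.e ≤ s • A.e := by
  apply A.le_of_sub_nonneg''
  have h3 : s • A.e - r • A.e = (s - r) • A.e := by rw [sub_smul]
  rw [h3]
  exact A.smul_nonneg' _ _ (by linarith) A.e_nonneg

/-- The order-unit norm. -/
noncomputable def onorm (a : A.carrier) : ℝ :=
  sInf {r : ℝ | -(r • A.e) ≤ a ∧ a ≤ r • A.e}

/-- A state: a unital positive linear functional. -/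
def IsState (μ : A.carrier →ₗ[ℝ] ℝ) : Prop :=
  μ A.e = 1 ∧ ∀ a : A.carrier, 0 ≤ a → 0 ≤ μ a

/-- The state space. -/
def State : Type := {μ : A.carrier →ₗ[ℝ] ℝ // A.IsState μ}

/-- The weak-* topology on the state space. -/
instance : TopologicalSpace A.State :=
  TopologicalSpace.induced (fun μ : A.State => (μ.1 : A.carrier → ℝ)) Pi.topologicalSpace

/-- The metric `ρ_L` on the state space defined by a seminorm `L`. -/
noncomputable def rho (L : Seminorm ℝ A.carrier) (μ ν : A.State) : ℝ≥0∞ :=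
  ⨆ a : {a : A.carrier // L a ≤ 1}, ENNReal.ofReal |μ.1 a.1 - ν.1 a.1|

/-- A Lipschitz seminorm: its null space is exactly `ℝ e`. -/
def IsLipschitz (L : Seminorm ℝ A.carrier) : Prop :=
  ∀ a : A.carrier, L a = 0 ↔ ∃ t : ℝ, a = t • A.e

/-- A Lip-norm: a Lipschitz seminorm whose metric `ρ_L` induces the weak-* topology. -/
def IsLipNorm (L : Seminorm ℝ A.carrier) : Prop :=
  A.IsLipschitz L ∧ ballTopology (A.rho L) = (inferInstance : TopologicalSpace A.State)

/-- The diameter of the state space for `ρ_L`. -/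
noncomputable def diam (L : Seminorm ℝ A.carrier) : ℝ≥0∞ :=
  ⨆ (μ : A.State) (ν : A.State), A.rho L μ ν

/-- The radius: half the diameter. -/
noncomputable def radius (L : Seminorm ℝ A.carrier) : ℝ≥0∞ := A.diam L / 2

/-- Morphism of order-unit spaces: a unital positive linear map. -/
def IsMorphism (f : A.carrier →ₗ[ℝ] B.carrier) : Prop :=
  f A.e = B.e ∧ ∀ a : A.carrier, 0 ≤ a → 0 ≤ f a

/-- Pull back a state along a morphism; this is `S(π)`. -/
noncomputable def pullState (f : A.carrier →ₗ[ℝ] B.carrier) (hf : A.IsMorphism B f)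
    (μ : B.State) : A.State :=
  ⟨(μ.1).comp f, by
    constructor
    · rw [LinearMap.comp_apply, hf.1]; exact μ.2.1
    · intro a ha; exact μ.2.2 _ (hf.2 a ha)⟩

/-- The direct sum `A ⊕ B` as an order-unit space. -/
@[reducible] def prod : OrderUnitSpace where
  carrier := A.carrier × B.carrier
  add_le_add_left' := by
    intro a b hab c
    rw [Prod.le_def] at hab ⊢
    exact ⟨A.add_le_add_left' _ _ hab.1 _, B.add_le_add_left' _ _ hab.2 _⟩
  smul_nonneg' := by
    intro r a hr ha
    rw [Prod.le_def] at ha ⊢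
    exact ⟨A.smul_nonneg' r a.1 hr ha.1, B.smul_nonneg' r a.2 hr ha.2⟩
  e := (A.e, B.e)
  e_nonneg := by
    rw [Prod.le_def]
    exact ⟨A.e_nonneg, B.e_nonneg⟩
  orderUnit := by
    intro a
    obtain ⟨r₁, h1⟩ := A.orderUnit a.1
    obtain ⟨r₂, h2⟩ := B.orderUnit a.2
    refine ⟨max r₁ r₂, ?_⟩
    rw [Prod.le_def]
    exact ⟨le_trans h1 (A.smul_e_mono (le_max_left _ _)),
      le_trans h2 (B.smul_e_mono (le_max_right _ _))⟩
  arch := by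
    intro a h
    rw [Prod.le_def]
    exact ⟨A.arch a.1 fun r hr => ((Prod.le_def.mp (h r hr)).1),
      B.arch a.2 fun r hr => ((Prod.le_def.mp (h r hr)).2)⟩

/-- The embedding of `S(A)` into `S(A ⊕ B)` dual to the first coordinate projection. -/
noncomputable def leftState (μ : A.State) : (A.prod B).State :=
  ⟨(μ.1).comp (LinearMap.fst ℝ A.carrier B.carrier), by
    constructor
    · exact μ.2.1
    · intro p hp; exact μ.2.2 p.1 hp.1⟩

/-- The embedding of `S(B)` into `S(A ⊕ B)` dual to the second coordinate projection. -/
noncomputable def rightState (ν : B.State) : (A.prod B).State :=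
  ⟨(ν.1).comp (LinearMap.snd ℝ A.carrier B.carrier), by
    constructor
    · exact ν.2.1
    · intro p hp; exact ν.2.2 p.2 hp.2⟩

/-- The set `M(L_A, L_B)` of Lip-norms on `A ⊕ B` inducing `L_A` and `L_B`
via the coordinate projections. -/
def admissible (LA : Seminorm ℝ A.carrier) (LB : Seminorm ℝ B.carrier) :
    Set (Seminorm ℝ (A.prod B).carrier) :=
  {L | (A.prod B).IsLipNorm L ∧
    Induces (Prod.fst : A.carrier × B.carrier → A.carrier) (fun p => L p) (fun a => LA a) ∧
    Induces (Prod.snd : A.carrier × B.carrier → B.carrier) (fun p => L p) (fun b => LB b)}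

/-- Quantum Gromov–Hausdorff distance. -/
noncomputable def distq (LA : Seminorm ℝ A.carrier) (LB : Seminorm ℝ B.carrier) : ℝ≥0∞ :=
  ⨅ L ∈ A.admissible B LA LB,
    hausdorffDistWith ((A.prod B).rho L) (Set.range (A.leftState B)) (Set.range (A.rightState B))

end OrderUnitSpace

namespace OrderUnitSpace

section
variable {A : OrderUnitSpace}

-- ### batch 1 : order and state basics
lemma sub_nonneg' {x y : A.carrier} (h : x ≤ y) : 0 ≤ y - x := by
  have h2 := A.add_le_add_left' x y h (-x)
  have h3 : -x + x = 0 := by abel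
  have h4 : -x + y = y - x := by abel
  rwa [h3, h4] at h2

lemma le_of_sub_nonneg' {x y : A.carrier} (h : 0 ≤ y - x) : x ≤ y := by
  have h2 := A.add_le_add_left' 0 (y - x) h x
  have h3 : x + (y - x) = y := by abel
  rw [add_zero, h3] at h2
  exact h2

lemma state_le_of_le (μ : A.State) {z : A.carrier} {r : ℝ} (h : z ≤ r • A.e) :
    μ.1 z ≤ r := by
  have h0 : 0 ≤ μ.1 (r • A.e - z) := μ.2.2 _ (sub_nonneg' h)
  rw [map_sub, map_smul, μ.2.1, smul_eq_mul, mul_one] at h0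
  linarith

lemma state_abs_le (μ : A.State) {z : A.carrier} {r : ℝ}
    (h1 : -(r • A.e) ≤ z) (h2 : z ≤ r • A.e) : |μ.1 z| ≤ r := by
  have hb : μ.1 z ≤ r := state_le_of_le μ h2
  have h1' : -z ≤ r • A.e := by
    have := sub_nonneg' h1
    apply le_of_sub_nonneg'
    have : r • A.e - -z = z - -(r • A.e) := by abel
    rw [this]
    exact sub_nonneg' h1
  have hb' : μ.1 (-z) ≤ r := state_le_of_le μ h1'
  rw [map_neg] at hb'
  exact abs_le.2 ⟨by linarith, hb⟩

-- ### rho basics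
lemma rho_self (L : Seminorm ℝ A.carrier) (μ : A.State) : A.rho L μ μ = 0 := by
  simp [rho]

lemma rho_comm (L : Seminorm ℝ A.carrier) (μ ν : A.State) :
    A.rho L μ ν = A.rho L ν μ := by
  unfold rho
  congr 1; funext a; rw [abs_sub_comm]

lemma ofReal_abs_le_rho (L : Seminorm ℝ A.carrier) (μ ν : A.State) {a : A.carrier}
    (h : L a ≤ 1) : ENNReal.ofReal |μ.1 a - ν.1 a| ≤ A.rho L μ ν :=
  le_iSup (fun x : {a : A.carrier // L a ≤ 1} => ENNReal.ofReal |μ.1 x.1 - ν.1 x.1|) ⟨a, h⟩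

lemma rho_triangle (L : Seminorm ℝ A.carrier) (μ ν σ : A.State) :
    A.rho L μ σ ≤ A.rho L μ ν + A.rho L ν σ := by
  refine iSup_le fun a => ?_
  have habs : |μ.1 a.1 - σ.1 a.1| ≤ |μ.1 a.1 - ν.1 a.1| + |ν.1 a.1 - σ.1 a.1| := by
    have := abs_sub_le (μ.1 a.1) (ν.1 a.1) (σ.1 a.1)
    linarith
  calc ENNReal.ofReal |μ.1 a.1 - σ.1 a.1|
      ≤ ENNReal.ofReal (|μ.1 a.1 - ν.1 a.1| + |ν.1 a.1 - σ.1 a.1|) :=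
        ENNReal.ofReal_le_ofReal habs
    _ ≤ ENNReal.ofReal |μ.1 a.1 - ν.1 a.1| + ENNReal.ofReal |ν.1 a.1 - σ.1 a.1| :=
        ENNReal.ofReal_add_le
    _ ≤ A.rho L μ ν + A.rho L ν σ :=
        add_le_add (ofReal_abs_le_rho L μ ν a.2) (ofReal_abs_le_rho L ν σ a.2)

lemma abs_le_toReal_rho {L : Seminorm ℝ A.carrier} (hlip : A.IsLipschitz L)
    (μ ν : A.State) (x : A.carrier) (hfin : A.rho L μ ν ≠ ⊤) :
    |μ.1 x - ν.1 x| ≤ (A.rho L μ ν).toReal * L x := by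
  rcases eq_or_lt_of_le (apply_nonneg L x) with h0 | hpos
  · obtain ⟨t, rfl⟩ := (hlip x).1 h0.symm
    rw [map_smul, map_smul, μ.2.1, ν.2.1]
    simp [mul_nonneg ENNReal.toReal_nonneg (apply_nonneg L _)]
  · set y := (L x)⁻¹ • x with hy
    have hLy : L y ≤ 1 := by
      rw [hy, map_smul_eq_mul, Real.norm_eq_abs,
        abs_of_nonneg (inv_nonneg.2 (le_of_lt hpos)), inv_mul_cancel₀ (ne_of_gt hpos)]
    have h1 : ENNReal.ofReal |μ.1 y - ν.1 y| ≤ A.rho L μ ν := ofReal_abs_le_rho L μ ν hLy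
    have h2 : |μ.1 y - ν.1 y| ≤ (A.rho L μ ν).toReal := by
      have := ENNReal.toReal_mono hfin h1
      rwa [ENNReal.toReal_ofReal (abs_nonneg _)] at this
    have h3 : μ.1 y - ν.1 y = (L x)⁻¹ * (μ.1 x - ν.1 x) := by
      rw [hy, map_smul, map_smul, smul_eq_mul, smul_eq_mul]; ring
    rw [h3, abs_mul, abs_of_nonneg (inv_nonneg.2 (le_of_lt hpos))] at h2
    calc |μ.1 x - ν.1 x| = L x * ((L x)⁻¹ * |μ.1 x - ν.1 x|) := by
          field_simp
      _ ≤ L x * (A.rho L μ ν).toReal := by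
          apply mul_le_mul_of_nonneg_left h2 (le_of_lt hpos)
      _ = (A.rho L μ ν).toReal * L x := mul_comm _ _


end

section

variable {A : OrderUnitSpace}

theorem smul_e_mono' (A : OrderUnitSpace) {r s : ℝ} (h : r ≤ s) : r • A.e ≤ s • A.e := by
  apply le_of_sub_nonneg'
  have h3 : s • A.e - r • A.e = (s - r) • A.e := by rw [sub_smul]
  rw [h3]
  exact A.smul_nonneg' _ _ (by linarith) A.e_nonneg

noncomputable def stbound (a : A.carrier) : ℝ :=
  max (A.orderUnit a).choose (A.orderUnit (-a)).choose

lemma mem_box (μ : A.State) (a : A.carrier) :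
    μ.1 a ∈ Set.Icc (-(stbound a)) (stbound a) := by
  have h1 : a ≤ (A.orderUnit a).choose • A.e := (A.orderUnit a).choose_spec
  have h2 : -a ≤ (A.orderUnit (-a)).choose • A.e := (A.orderUnit (-a)).choose_spec
  constructor
  · have := state_le_of_le μ (le_trans h2 (smul_e_mono' A
      (le_max_right (A.orderUnit a).choose (A.orderUnit (-a)).choose)))
    rw [map_neg] at this
    simp only [stbound]
    linarith
  · exact state_le_of_le μ (le_trans h1 (smul_e_mono' A
      (le_max_left (A.orderUnit a).choose (A.orderUnit (-a)).choose)))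

lemma compactSpace_state (A : OrderUnitSpace) : CompactSpace A.State := by
  set ι : A.State → (A.carrier → ℝ) := fun μ => ⇑μ.1 with hι
  set K : Set (A.carrier → ℝ) := {f | (∀ x y, f (x + y) = f x + f y) ∧
    (∀ (c : ℝ) x, f (c • x) = c * f x) ∧ f A.e = 1 ∧ ∀ x, 0 ≤ x → 0 ≤ f x} with hK
  have hrange : Set.range ι = K := by
    ext f
    constructor
    · rintro ⟨μ, rfl⟩
      exact ⟨fun x y => map_add μ.1 x y, fun c x => μ.1.map_smul' c x, μ.2.1, μ.2.2⟩
    · rintro ⟨hadd, hsmul, he, hpos⟩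
      exact ⟨⟨{ toFun := f, map_add' := hadd, map_smul' := hsmul }, he, hpos⟩, rfl⟩
  have hclosed : IsClosed K := by
    have h1 : IsClosed {f : A.carrier → ℝ | ∀ x y, f (x + y) = f x + f y} := by
      have : {f : A.carrier → ℝ | ∀ x y, f (x + y) = f x + f y} =
          ⋂ (x) (y), {f : A.carrier → ℝ | f (x + y) = f x + f y} := by
        ext f; simp
      rw [this]
      refine isClosed_iInter fun x => isClosed_iInter fun y => ?_
      exact isClosed_eq (continuous_apply _) ((continuous_apply x).add (continuous_apply y))
    have h2 : IsClosed {f : A.carrier → ℝ | ∀ (c : ℝ) x, f (c • x) = c * f x} := by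
      have : {f : A.carrier → ℝ | ∀ (c : ℝ) x, f (c • x) = c * f x} =
          ⋂ (c : ℝ) (x), {f : A.carrier → ℝ | f (c • x) = c * f x} := by
        ext f; simp
      rw [this]
      refine isClosed_iInter fun c => isClosed_iInter fun x => ?_
      exact isClosed_eq (continuous_apply _) (continuous_const.mul (continuous_apply x))
    have h3 : IsClosed {f : A.carrier → ℝ | f A.e = 1} :=
      isClosed_eq (continuous_apply _) continuous_const
    have h4 : IsClosed {f : A.carrier → ℝ | ∀ x, 0 ≤ x → 0 ≤ f x} := by
      have : {f : A.carrier → ℝ | ∀ x, 0 ≤ x → 0 ≤ f x} =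
          ⋂ (x) (_ : (0:A.carrier) ≤ x), {f : A.carrier → ℝ | 0 ≤ f x} := by
        ext f; simp
      rw [this]
      refine isClosed_iInter fun x => isClosed_iInter fun hx => ?_
      exact isClosed_le continuous_const (continuous_apply x)
    have : K = ({f : A.carrier → ℝ | ∀ x y, f (x + y) = f x + f y} ∩
        {f : A.carrier → ℝ | ∀ (c : ℝ) x, f (c • x) = c * f x}) ∩
        ({f : A.carrier → ℝ | f A.e = 1} ∩ {f : A.carrier → ℝ | ∀ x, 0 ≤ x → 0 ≤ f x}) := by
      ext f
      simp only [hK, Set.mem_setOf_eq, Set.mem_inter_iff]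
      tauto
    rw [this]
    exact (h1.inter h2).inter (h3.inter h4)
  have hsub : K ⊆ Set.pi Set.univ (fun a => Set.Icc (-(stbound a)) (stbound a)) := by
    rintro f ⟨hadd, hsmul, he, hpos⟩ a _
    have : (⟨{ toFun := f, map_add' := hadd, map_smul' := hsmul }, he, hpos⟩ : A.State).1 a
        ∈ Set.Icc (-(stbound a)) (stbound a) := mem_box _ a
    exact this
  have hKc : IsCompact K :=
    IsCompact.of_isClosed_subset (isCompact_univ_pi fun a => isCompact_Icc) hclosed hsub
  have hemb : Topology.IsEmbedding ι := by
    refine ⟨⟨rfl⟩, fun μ ν h => ?_⟩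
    exact Subtype.ext (DFunLike.coe_injective h)
  refine ⟨?_⟩
  rw [hemb.isCompact_iff, Set.image_univ, hrange]
  exact hKc


end

section

variable {A : OrderUnitSpace}

lemma ball_basic_open {ρ : A.State → A.State → ℝ≥0∞} {μ : A.State} {ε : ℝ≥0∞} (hε : 0 < ε) :
    IsOpen[ballTopology ρ] {ν | ρ μ ν < ε} :=
  TopologicalSpace.isOpen_generateFrom_of_mem ⟨μ, ε, hε, rfl⟩

lemma isOpen_ball {L : Seminorm ℝ A.carrier}
    (hL2 : ballTopology (A.rho L) = (inferInstance : TopologicalSpace A.State))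
    {μ : A.State} {ε : ℝ≥0∞} (hε : 0 < ε) : IsOpen {ν | A.rho L μ ν < ε} := by
  have := ball_basic_open (ρ := A.rho L) (μ := μ) hε
  rwa [hL2] at this

/-- convex combination of states -/
noncomputable def comb (μ ν : A.State) (s : ℝ) (h0 : 0 ≤ s) (h1 : s ≤ 1) : A.State :=
  ⟨(1 - s) • μ.1 + s • ν.1, by
    constructor
    · simp only [LinearMap.add_apply, LinearMap.smul_apply, μ.2.1, ν.2.1, smul_eq_mul]
      ring
    · intro a ha
      simp only [LinearMap.add_apply, LinearMap.smul_apply, smul_eq_mul]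
      have := μ.2.2 a ha
      have := ν.2.2 a ha
      nlinarith⟩

lemma rho_ne_top {L : Seminorm ℝ A.carrier}
    (hL2 : ballTopology (A.rho L) = (inferInstance : TopologicalSpace A.State))
    (μ ν : A.State) : A.rho L μ ν ≠ ⊤ := by
  set c : ℝ → ℝ := fun t => max 0 (min 1 t) with hc
  have hc0 : ∀ t, 0 ≤ c t := fun t => le_max_left _ _
  have hc1 : ∀ t, c t ≤ 1 := fun t => max_le zero_le_one (min_le_left _ _)
  set σ : ℝ → A.State := fun t => comb μ ν (c t) (hc0 t) (hc1 t) with hσ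
  have hcont : Continuous σ := by
    rw [continuous_induced_rng]
    refine continuous_pi fun a => ?_
    have hcc : Continuous c := continuous_const.max (continuous_const.min continuous_id)
    have heq : (fun t => (((fun μ : A.State => (⇑μ.1 : A.carrier → ℝ)) ∘ σ) t a)) =
        fun t => (1 - c t) * μ.1 a + c t * ν.1 a := by
      funext t
      simp [hσ, comb]
      rfl
    rw [heq]
    exact ((continuous_const.sub hcc).mul continuous_const).add (hcc.mul continuous_const)
  have hσ0 : σ 0 = μ := by
    apply Subtype.ext
    simp [hσ, comb, hc]
  have hUopen : IsOpen {η | A.rho L μ η < 1} := isOpen_ball hL2 zero_lt_one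
  have h0mem : (0:ℝ) ∈ σ ⁻¹' {η | A.rho L μ η < 1} := by
    simp only [Set.mem_preimage, hσ0, Set.mem_setOf_eq, rho_self]
    exact zero_lt_one
  obtain ⟨δ, hδ, hball⟩ := Metric.isOpen_iff.1 (hUopen.preimage hcont) 0 h0mem
  set t := min (δ/2) 2⁻¹ with ht
  have htpos : 0 < t := lt_min (by linarith) (by norm_num)
  have ht1 : t ≤ 1 := le_trans (min_le_right _ _) (by norm_num)
  have htmem : t ∈ Metric.ball (0:ℝ) δ := by
    rw [Metric.mem_ball, Real.dist_eq, sub_zero, abs_of_pos htpos]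
    exact lt_of_le_of_lt (min_le_left _ _) (by linarith)
  have hlt : A.rho L μ (σ t) < 1 := hball htmem
  have hct : c t = t := by
    rw [hc]
    simp only [min_eq_right ht1, max_eq_right htpos.le]
  intro htop
  have hbound : A.rho L μ ν ≤ ENNReal.ofReal t⁻¹ := by
    refine iSup_le fun a => ?_
    have h1 : ENNReal.ofReal |μ.1 a.1 - (σ t).1 a.1| < 1 :=
      lt_of_le_of_lt (ofReal_abs_le_rho L μ (σ t) a.2) hlt
    have h2 : |μ.1 a.1 - (σ t).1 a.1| < 1 := by
      rwa [← ENNReal.ofReal_one, ENNReal.ofReal_lt_ofReal_iff zero_lt_one] at h1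
    have h3 : μ.1 a.1 - (σ t).1 a.1 = t * (μ.1 a.1 - ν.1 a.1) := by
      simp only [hσ, comb, LinearMap.add_apply, LinearMap.smul_apply, smul_eq_mul, hct]
      ring
    rw [h3, abs_mul, abs_of_pos htpos] at h2
    have h4 : |μ.1 a.1 - ν.1 a.1| ≤ t⁻¹ := by
      rw [← lt_div_iff₀' htpos, one_div] at h2
      exact le_of_lt h2
    exact ENNReal.ofReal_le_ofReal h4
  rw [htop] at hbound
  exact absurd (top_le_iff.1 hbound) ENNReal.ofReal_ne_top


end

section

variable {A : OrderUnitSpace}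

lemma exists_net {L : Seminorm ℝ A.carrier}
    (hL2 : ballTopology (A.rho L) = (inferInstance : TopologicalSpace A.State))
    {ε₁ : ℝ≥0∞} (hε : 0 < ε₁) :
    ∃ F : Finset A.State, ∀ σ : A.State, ∃ μ ∈ F, A.rho L μ σ < ε₁ := by
  haveI := compactSpace_state A
  obtain ⟨F, hF⟩ := IsCompact.elim_finite_subcover (isCompact_univ (X := A.State))
    (fun μ : A.State => {ν | A.rho L μ ν < ε₁}) (fun μ => isOpen_ball hL2 hε)
    (fun σ _ => Set.mem_iUnion.2 ⟨σ, by simp [rho_self, hε]⟩)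
  refine ⟨F, fun σ => ?_⟩
  have := hF (Set.mem_univ σ)
  simpa using this

/-- The key topological equality criterion. -/
theorem topeq {M : Seminorm ℝ A.carrier} (hlip : A.IsLipschitz M)
    (hnet : ∀ γ : ℝ, 0 < γ → ∃ T : Set A.carrier, T.Finite ∧ ∀ x, M x ≤ 1 →
      ∃ y ∈ T, ∃ t : ℝ, ∀ Ω : A.State, |Ω.1 x - Ω.1 y - t| ≤ γ) :
    ballTopology (A.rho M) = (inferInstance : TopologicalSpace A.State) := by
  apply le_antisymm
  · -- every weak-* open is ball-open
    intro U hU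
    -- hU : IsOpen[instance] U ; goal : IsOpen[ballTopology] U
    have key : ∀ ω ∈ U, ∃ ε : ℝ≥0∞, 0 < ε ∧ {ν | A.rho M ω ν < ε} ⊆ U := by
      intro ω hω
      obtain ⟨V, hVopen, rfl⟩ := isOpen_induced_iff.1 hU
      obtain ⟨I, u, hIu, hpi⟩ := isOpen_pi_iff.1 hVopen _ hω
      rcases I.eq_empty_or_nonempty with hI | hI
      · refine ⟨1, zero_lt_one, fun ν _ => hpi ?_⟩
        subst hI
        simp
      · have hδ : ∀ i ∈ I, ∃ δ : ℝ, 0 < δ ∧ Metric.ball (ω.1 i) δ ⊆ u i := by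
          intro i hi
          obtain ⟨δ, h1, h2⟩ := Metric.isOpen_iff.1 (hIu i hi).1 _ (hIu i hi).2
          exact ⟨δ, h1, h2⟩
        choose δf hδf1 hδf2 using hδ
        set δ := I.attach.inf' (by simpa using hI) (fun i => δf i.1 i.2) with hδdef
        have hδpos : 0 < δ := by
          rw [hδdef, Finset.lt_inf'_iff]
          exact fun i _ => hδf1 i.1 i.2
        set cc : ℝ := 1 + ∑ i ∈ I, M i with hcc
        have hc1 : 0 < cc := by
          have : (0:ℝ) ≤ ∑ i ∈ I, M i := Finset.sum_nonneg fun i _ => apply_nonneg M i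
          linarith
        refine ⟨ENNReal.ofReal (δ / cc), ENNReal.ofReal_pos.2 (div_pos hδpos hc1), ?_⟩
        intro ν hν
        simp only [Set.mem_setOf_eq] at hν
        have hne : A.rho M ω ν ≠ ⊤ := (lt_of_lt_of_le hν le_top).ne
        have htr : (A.rho M ω ν).toReal < δ / cc := by
          rw [← ENNReal.toReal_ofReal (le_of_lt (div_pos hδpos hc1))]
          exact (ENNReal.toReal_lt_toReal hne ENNReal.ofReal_ne_top).2 hν
        apply hpi
        rw [Set.mem_pi]
        intro i hi
        have hiI : i ∈ I := Finset.mem_coe.1 hi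
        apply hδf2 i hiI
        rw [Metric.mem_ball, Real.dist_eq]
        have hδle : δ ≤ δf i hiI := by
          rw [hδdef]
          exact Finset.inf'_le _ (Finset.mem_attach I ⟨i, hiI⟩)
        have h1 : |ν.1 i - ω.1 i| ≤ (A.rho M ω ν).toReal * M i := by
          rw [abs_sub_comm]
          exact abs_le_toReal_rho hlip ω ν i hne
        have h2 : M i ≤ cc := by
          rw [hcc]
          have := Finset.single_le_sum (f := fun j => (M j : ℝ))
            (fun j _ => apply_nonneg M j) hiI
          linarith
        have hfin : |ν.1 i - ω.1 i| < δ :=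
          calc |ν.1 i - ω.1 i| ≤ (A.rho M ω ν).toReal * M i := h1
            _ ≤ (A.rho M ω ν).toReal * cc := by
                exact mul_le_mul_of_nonneg_left h2 ENNReal.toReal_nonneg
            _ < (δ / cc) * cc := by
                exact mul_lt_mul_of_pos_right htr hc1
            _ = δ := by field_simp
        exact lt_of_lt_of_le hfin hδle
    choose εf hεf1 hεf2 using key
    have hU' : U = ⋃ (ω : A.State) (h : ω ∈ U), {ν | A.rho M ω ν < εf ω h} := by
      apply subset_antisymm
      · intro ω hω
        refine Set.mem_iUnion.2 ⟨ω, Set.mem_iUnion.2 ⟨hω, ?_⟩⟩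
        simp [rho_self, hεf1 ω hω]
      · refine Set.iUnion_subset fun ω => Set.iUnion_subset fun h => hεf2 ω h
    rw [hU']
    exact @isOpen_iUnion _ _ (ballTopology (A.rho M)) _ fun ω =>
      @isOpen_iUnion _ _ (ballTopology (A.rho M)) _ fun h => ball_basic_open (hεf1 ω h)
  · -- every ball is weak-* open
    apply le_generateFrom
    rintro U ⟨ω, ε, hε, rfl⟩
    rw [isOpen_iff_forall_mem_open]
    intro ω' hω'
    simp only [Set.mem_setOf_eq] at hω'
    obtain ⟨p, hp, hpε⟩ := ENNReal.lt_iff_exists_add_pos_lt.1 hω'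
    set γ : ℝ := (p : ℝ) / 3 with hγ
    have hγpos : 0 < γ := by positivity
    obtain ⟨T, hTfin, hT⟩ := hnet γ hγpos
    refine ⟨⋂ y ∈ T, {Ω'' : A.State | |Ω''.1 y - ω'.1 y| < γ}, ?_, ?_, ?_⟩
    · intro Ω'' hΩ''
      simp only [Set.mem_iInter, Set.mem_setOf_eq] at hΩ''
      have hrho : A.rho M ω' Ω'' ≤ ENNReal.ofReal (3 * γ) := by
        refine iSup_le fun x => ?_
        obtain ⟨y, hy, t, ht⟩ := hT x.1 x.2
        have e1 : |ω'.1 x.1 - ω'.1 y - t| ≤ γ := ht ω'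
        have e2 : |Ω''.1 x.1 - Ω''.1 y - t| ≤ γ := ht Ω''
        have e3 : |Ω''.1 y - ω'.1 y| < γ := hΩ'' y hy
        have : |ω'.1 x.1 - Ω''.1 x.1| ≤ 3 * γ := by
          have habs : ω'.1 x.1 - Ω''.1 x.1 =
              (ω'.1 x.1 - ω'.1 y - t) - (Ω''.1 x.1 - Ω''.1 y - t) - (Ω''.1 y - ω'.1 y) := by
            ring
          rw [habs]
          calc |(ω'.1 x.1 - ω'.1 y - t) - (Ω''.1 x.1 - Ω''.1 y - t) - (Ω''.1 y - ω'.1 y)|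
              ≤ |(ω'.1 x.1 - ω'.1 y - t) - (Ω''.1 x.1 - Ω''.1 y - t)| + |Ω''.1 y - ω'.1 y| :=
                abs_sub _ _
            _ ≤ |ω'.1 x.1 - ω'.1 y - t| + |Ω''.1 x.1 - Ω''.1 y - t| + |Ω''.1 y - ω'.1 y| := by
                have := abs_sub (ω'.1 x.1 - ω'.1 y - t) (Ω''.1 x.1 - Ω''.1 y - t)
                linarith
            _ ≤ 3 * γ := by linarith [le_of_lt e3]
        exact ENNReal.ofReal_le_ofReal this
      have : A.rho M ω Ω'' ≤ A.rho M ω ω' + ENNReal.ofReal (3 * γ) :=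
        le_trans (rho_triangle M ω ω' Ω'') (add_le_add le_rfl hrho)
      have h3γ : ENNReal.ofReal (3 * γ) = (p : ℝ≥0∞) := by
        rw [hγ]
        rw [show 3 * ((p:ℝ)/3) = (p:ℝ) by ring]
        exact ENNReal.ofReal_coe_nnreal
      rw [h3γ] at this
      exact lt_of_le_of_lt this hpε
    · refine Set.Finite.isOpen_biInter hTfin fun y _ => ?_
      have : {Ω'' : A.State | |Ω''.1 y - ω'.1 y| < γ} =
          (fun Ω'' : A.State => Ω''.1 y) ⁻¹' (Metric.ball (ω'.1 y) γ) := by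
        ext Ω''
        simp [Metric.mem_ball, Real.dist_eq]
      rw [this]
      have hcont : Continuous (fun Ω'' : A.State => Ω''.1 y) :=
        (continuous_apply y).comp continuous_induced_dom
      exact hcont.isOpen_preimage _ Metric.isOpen_ball
    · simp only [Set.mem_iInter, Set.mem_setOf_eq]
      intro y _
      simpa using hγpos


end

section

variable (A : OrderUnitSpace)

/-- evaluation of states map into `ℝ^F` -/
noncomputable def piMap (F : Finset A.State) : A.carrier →ₗ[ℝ] (↥F → ℝ) where
  toFun := fun a ω => ω.1.1 a
  map_add' := fun x y => by funext ω; simp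
  map_smul' := fun c x => by funext ω; simp

/-- the image order-unit space -/
@[reducible] noncomputable def BS (F : Finset A.State) : OrderUnitSpace where
  carrier := ↥(LinearMap.range (piMap A F))
  add_le_add_left' := by
    intro a b hab c
    rw [← Subtype.coe_le_coe] at hab ⊢
    intro ω
    exact add_le_add le_rfl (hab ω)
  smul_nonneg' := by
    intro r a hr ha
    rw [← Subtype.coe_le_coe] at ha ⊢
    intro ω
    have := ha ω
    simpa using mul_nonneg hr (by simpa using this)
  e := ⟨piMap A F A.e, LinearMap.mem_range_self _ _⟩
  e_nonneg := by
    rw [← Subtype.coe_le_coe]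
    intro ω
    simp only [ZeroMemClass.coe_zero, Pi.zero_apply, piMap]
    show (0:ℝ) ≤ ω.1.1 A.e
    rw [ω.1.2.1]
    exact zero_le_one
  orderUnit := by
    rintro ⟨b, hb⟩
    obtain ⟨a, rfl⟩ := hb
    obtain ⟨r, hr⟩ := A.orderUnit a
    refine ⟨r, ?_⟩
    rw [← Subtype.coe_le_coe]
    intro ω
    have h1 : ω.1.1 a ≤ r := state_le_of_le ω.1 hr
    show (piMap A F) a ω ≤ (r • (piMap A F A.e : ↥F → ℝ)) ω
    simp only [piMap, Pi.smul_apply, smul_eq_mul, LinearMap.coe_mk, AddHom.coe_mk]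
    show ω.1.1 a ≤ r * ω.1.1 A.e
    rw [ω.1.2.1, mul_one]
    exact h1
  arch := by
    intro b h
    rw [← Subtype.coe_le_coe]
    intro ω
    have key : ∀ r : ℝ, 0 < r → b.1 ω ≤ r := by
      intro r hr
      have := h r hr
      rw [← Subtype.coe_le_coe] at this
      have h2 := this ω
      simp only [SetLike.val_smul, Pi.smul_apply, smul_eq_mul] at h2
      have he : (piMap A F A.e : ↥F → ℝ) ω = 1 := by
        show ω.1.1 A.e = 1
        exact ω.1.2.1
      rw [he, mul_one] at h2
      exact h2
    simp only [ZeroMemClass.coe_zero, Pi.zero_apply]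
    by_contra hneg
    push_neg at hneg
    have := key (b.1 ω / 2) (by linarith)
    linarith

variable {A}

lemma BS_le_iff {F : Finset A.State} (x y : (A.BS F).carrier) :
    x ≤ y ↔ ∀ ω : ↥F, x.1 ω ≤ y.1 ω := by
  rw [← Subtype.coe_le_coe, Pi.le_def]

lemma BS_e_apply {F : Finset A.State} (ω : ↥F) : (A.BS F).e.1 ω = 1 := ω.1.2.1

lemma BS_smul_coe {F : Finset A.State} (r : ℝ) (x : (A.BS F).carrier) :
    (r • x).1 = r • (x.1 : ↥F → ℝ) := rfl

lemma BS_smul_e_coord {F : Finset A.State} (r : ℝ) (ω : ↥F) :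
    ((r • (A.BS F).e)).1 ω = r := by
  have h : ((r • (A.BS F).e)).1 ω = r * ((A.BS F).e.1 ω) := rfl
  rw [h, BS_e_apply, mul_one]

/-- states of `BS` are bounded by the sup norm -/
lemma BS_state_abs_le {F : Finset A.State} (ν : (A.BS F).State) (b : (A.BS F).carrier) :
    |ν.1 b| ≤ ‖(b.1 : ↥F → ℝ)‖ := by
  refine state_abs_le ν (r := ‖(b.1 : ↥F → ℝ)‖) ?_ ?_
  · rw [← Subtype.coe_le_coe]
    intro ω
    have h1 : |b.1 ω| ≤ ‖(b.1 : ↥F → ℝ)‖ := by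
      have := norm_le_pi_norm (b.1 : ↥F → ℝ) ω
      simpa [Real.norm_eq_abs] using this
    show (-(‖(b.1 : ↥F → ℝ)‖ • ((A.BS F).e))).1 ω ≤ b.1 ω
    have habs := abs_le.1 h1
    calc (-(‖(b.1 : ↥F → ℝ)‖ • ((A.BS F).e))).1 ω
        = -(‖(b.1 : ↥F → ℝ)‖) := by
          show -((‖(b.1 : ↥F → ℝ)‖ • ((A.BS F).e)).1 ω) = _
          rw [BS_smul_e_coord]
      _ ≤ b.1 ω := habs.1
  · rw [BS_le_iff]
    intro ω
    have h1 : |b.1 ω| ≤ ‖(b.1 : ↥F → ℝ)‖ := by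
      have := norm_le_pi_norm (b.1 : ↥F → ℝ) ω
      simpa [Real.norm_eq_abs] using this
    calc b.1 ω ≤ ‖(b.1 : ↥F → ℝ)‖ := (abs_le.1 h1).2
      _ = (‖(b.1 : ↥F → ℝ)‖ • ((A.BS F).e)).1 ω := (BS_smul_e_coord _ _).symm


end

section

variable {A : OrderUnitSpace}

section QS
variable {E : Type} [AddCommGroup E] [Module ℝ E]
variable (π : A.carrier →ₗ[ℝ] E) (hπ : Function.Surjective π) (L : Seminorm ℝ A.carrier)
include hπ

lemma qs_nonempty (b : E) : {r : ℝ | ∃ a, π a = b ∧ L a = r}.Nonempty := by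
  obtain ⟨a, ha⟩ := hπ b
  exact ⟨L a, a, ha, rfl⟩

lemma qs_bdd (b : E) : BddBelow {r : ℝ | ∃ a, π a = b ∧ L a = r} := by
  refine ⟨0, fun r hr => ?_⟩
  obtain ⟨a, _, rfl⟩ := hr
  exact apply_nonneg L a

lemma qs_le {b : E} {a : A.carrier} (ha : π a = b) :
    quotientSeminorm π (fun x => L x) b ≤ L a :=
  csInf_le (qs_bdd π hπ L b) ⟨a, ha, rfl⟩

lemma qs_nonneg (b : E) : 0 ≤ quotientSeminorm π (fun x => L x) b :=
  le_csInf (qs_nonempty π hπ L b) fun r hr => by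
    obtain ⟨a, _, rfl⟩ := hr; exact apply_nonneg L a

lemma qs_lt {b : E} {r : ℝ} (h : quotientSeminorm π (fun x => L x) b < r) :
    ∃ a, π a = b ∧ L a < r := by
  obtain ⟨s, ⟨a, ha, rfl⟩, hs⟩ :=
    (csInf_lt_iff (qs_bdd π hπ L b) (qs_nonempty π hπ L b)).1 h
  exact ⟨a, ha, hs⟩

lemma qs_smul_le (c : ℝ) (b : E) :
    quotientSeminorm π (fun x => L x) (c • b) ≤ |c| * quotientSeminorm π (fun x => L x) b := by
  refine le_of_forall_pos_le_add fun ε hε => ?_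
  rcases eq_or_ne c 0 with rfl | hc
  · simp only [zero_smul, abs_zero, zero_mul, zero_add]
    have h0 : quotientSeminorm π (fun x => L x) (0:E) ≤ L 0 := qs_le π hπ L (map_zero π)
    simp only [map_zero] at h0
    linarith [h0, hε]
  · have hcpos : 0 < |c| := abs_pos.2 hc
    obtain ⟨a, ha, hla⟩ := qs_lt π hπ L
      (lt_add_of_pos_right (quotientSeminorm π (fun x => L x) b) (div_pos hε hcpos))
    have hπca : π (c • a) = c • b := by rw [map_smul, ha]
    have := qs_le π hπ L hπca
    rw [map_smul_eq_mul, Real.norm_eq_abs] at this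
    calc quotientSeminorm π (fun x => L x) (c • b) ≤ |c| * L a := this
      _ ≤ |c| * (quotientSeminorm π (fun x => L x) b + ε / |c|) :=
          mul_le_mul_of_nonneg_left (le_of_lt hla) (abs_nonneg c)
      _ = |c| * quotientSeminorm π (fun x => L x) b + ε := by field_simp
  
/-- the quotient seminorm, as a bundled seminorm -/
noncomputable def QS : Seminorm ℝ E :=
  Seminorm.of (quotientSeminorm π (fun x => L x))
    (by
      intro b1 b2
      refine le_of_forall_pos_le_add fun ε hε => ?_
      obtain ⟨a1, ha1, hla1⟩ := qs_lt π hπ L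
        (lt_add_of_pos_right (quotientSeminorm π (fun x => L x) b1) (half_pos hε))
      obtain ⟨a2, ha2, hla2⟩ := qs_lt π hπ L
        (lt_add_of_pos_right (quotientSeminorm π (fun x => L x) b2) (half_pos hε))
      have hsum : π (a1 + a2) = b1 + b2 := by rw [map_add, ha1, ha2]
      calc quotientSeminorm π (fun x => L x) (b1 + b2) ≤ L (a1 + a2) := qs_le π hπ L hsum
        _ ≤ L a1 + L a2 := map_add_le_add L a1 a2
        _ ≤ _ := by linarith)
    (by
      intro c b
      refine le_antisymm ?_ ?_
      · rw [Real.norm_eq_abs]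
        exact qs_smul_le π hπ L c b
      · rcases eq_or_ne c 0 with rfl | hc
        · simp only [norm_zero, zero_mul]
          exact qs_nonneg π hπ L _
        · have h2 := qs_smul_le π hπ L c⁻¹ (c • b)
          rw [inv_smul_smul₀ hc] at h2
          rw [Real.norm_eq_abs]
          calc |c| * quotientSeminorm π (fun x => L x) b
              ≤ |c| * (|c⁻¹| * quotientSeminorm π (fun x => L x) (c • b)) :=
                mul_le_mul_of_nonneg_left h2 (abs_nonneg c)
            _ = quotientSeminorm π (fun x => L x) (c • b) := by
                rw [abs_inv]
                field_simp)

lemma QS_apply (b : E) : QS π hπ L b = quotientSeminorm π (fun x => L x) b := rfl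

end QS

/-- the quotient map onto `BS` -/
noncomputable def proj (A : OrderUnitSpace) (F : Finset A.State) :
    A.carrier →ₗ[ℝ] (A.BS F).carrier := (piMap A F).rangeRestrict

lemma proj_surj (F : Finset A.State) : Function.Surjective (proj A F) :=
  LinearMap.surjective_rangeRestrict _

lemma proj_coord (F : Finset A.State) (a : A.carrier) (ω : ↥F) :
    ((proj A F) a).1 ω = ω.1.1 a := rfl

lemma proj_e (F : Finset A.State) : proj A F A.e = (A.BS F).e := Subtype.ext rfl

lemma proj_pos (F : Finset A.State) {a : A.carrier} (ha : 0 ≤ a) : 0 ≤ proj A F a := by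
  rw [BS_le_iff]
  intro ω
  show (0 : ↥F → ℝ) ω ≤ ((proj A F) a).1 ω
  rw [proj_coord]
  exact ω.1.2.2 a ha

/-- pull back a state of `BS F` to a state of `A` -/
noncomputable def pullB {F : Finset A.State} (ν : (A.BS F).State) : A.State :=
  ⟨ν.1.comp (proj A F), by
    constructor
    · show ν.1 (proj A F A.e) = 1
      rw [proj_e]
      exact ν.2.1
    · intro a ha
      exact ν.2.2 _ (proj_pos F ha)⟩

lemma pullB_apply {F : Finset A.State} (ν : (A.BS F).State) (a : A.carrier) :
    (pullB ν).1 a = ν.1 (proj A F a) := rfl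

/-- the induced seminorm on `BS` -/
noncomputable def LBS (L : Seminorm ℝ A.carrier) (F : Finset A.State) :
    Seminorm ℝ (A.BS F).carrier := QS (proj A F) (proj_surj F) L

lemma LBS_lipschitz {L : Seminorm ℝ A.carrier} (hlip : A.IsLipschitz L)
    (hL2 : ballTopology (A.rho L) = (inferInstance : TopologicalSpace A.State))
    (F : Finset A.State) : (A.BS F).IsLipschitz (LBS L F) := by
  intro b
  constructor
  · intro hb
    have key : ∀ ω ω' : ↥F, b.1 ω = b.1 ω' := by
      intro ω ω'
      have hC : ∀ δ : ℝ, 0 < δ → |b.1 ω - b.1 ω'| ≤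
          ((A.rho L ω.1 ω'.1).toReal + 1) * δ := by
        intro δ hδ
        have hlt : quotientSeminorm (proj A F) (fun x => L x) b < δ := by
          rw [show quotientSeminorm (proj A F) (fun x => L x) b = LBS L F b from rfl, hb]
          exact hδ
        obtain ⟨a, ha, hla⟩ := qs_lt (proj A F) (proj_surj F) L hlt
        have h1 : |ω.1.1 a - ω'.1.1 a| ≤ (A.rho L ω.1 ω'.1).toReal * L a :=
          abs_le_toReal_rho hlip ω.1 ω'.1 a (rho_ne_top hL2 ω.1 ω'.1)
        have h2 : b.1 ω = ω.1.1 a := by rw [← ha, proj_coord]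
        have h3 : b.1 ω' = ω'.1.1 a := by rw [← ha, proj_coord]
        rw [h2, h3]
        have h4 : (A.rho L ω.1 ω'.1).toReal * L a ≤
            ((A.rho L ω.1 ω'.1).toReal + 1) * δ := by
          have h5 : (0:ℝ) ≤ (A.rho L ω.1 ω'.1).toReal := ENNReal.toReal_nonneg
          have h6 : (0:ℝ) ≤ L a := apply_nonneg L a
          nlinarith
        linarith
      by_contra hne
      have habs : 0 < |b.1 ω - b.1 ω'| := abs_pos.2 (sub_ne_zero.2 hne)
      have hCpos : 0 < (A.rho L ω.1 ω'.1).toReal + 1 := by positivity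
      have h7 := hC (|b.1 ω - b.1 ω'| / (2 * ((A.rho L ω.1 ω'.1).toReal + 1)))
        (by positivity)
      set C := (A.rho L ω.1 ω'.1).toReal + 1 with hCdef
      have h8 : |b.1 ω - b.1 ω'| ≤ |b.1 ω - b.1 ω'| / 2 := by
        calc |b.1 ω - b.1 ω'| ≤ C * (|b.1 ω - b.1 ω'| / (2 * C)) := h7
          _ = |b.1 ω - b.1 ω'| / 2 := by field_simp
      linarith
    rcases isEmpty_or_nonempty (↥F) with hF | hF
    · refine ⟨0, ?_⟩
      apply Subtype.ext
      funext ω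
      exact hF.elim ω
    · obtain ω₀ := Classical.arbitrary (↥F)
      refine ⟨b.1 ω₀, ?_⟩
      apply Subtype.ext
      funext ω
      show b.1 ω = (b.1 ω₀ • ((A.BS F).e)).1 ω
      rw [BS_smul_e_coord]
      exact key ω ω₀
  · rintro ⟨t, rfl⟩
    refine le_antisymm ?_ (qs_nonneg (proj A F) (proj_surj F) L _)
    have hπ : proj A F (t • A.e) = t • (A.BS F).e := by rw [map_smul, proj_e]
    have h1 := qs_le (proj A F) (proj_surj F) L hπ
    have h2 : L (t • A.e) = 0 := by
      rw [map_smul_eq_mul]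
      have : L A.e = 0 := (hlip A.e).2 ⟨1, (one_smul ℝ A.e).symm⟩
      rw [this, mul_zero]
    show quotientSeminorm (proj A F) (fun x => L x) (t • (A.BS F).e) ≤ 0
    rw [← h2]
    exact h1

instance BS_findim (F : Finset A.State) : FiniteDimensional ℝ (A.BS F).carrier := by
  show FiniteDimensional ℝ ↥(LinearMap.range (piMap A F))
  infer_instance


end

section

variable {A : OrderUnitSpace}

/-- The approximation net lemma for `A`. -/
theorem netA {L : Seminorm ℝ A.carrier} (hlip : A.IsLipschitz L)
    (hL2 : ballTopology (A.rho L) = (inferInstance : TopologicalSpace A.State)) :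
    ∀ γ : ℝ, 0 < γ → ∃ T : Set A.carrier, T.Finite ∧ ∀ x, L x ≤ 1 →
      ∃ y ∈ T, ∃ t : ℝ, ∀ Ω : A.State, |Ω.1 x - Ω.1 y - t| ≤ γ := by
  intro γ hγ
  rcases isEmpty_or_nonempty A.State with hS | hS
  · exact ⟨{0}, Set.finite_singleton _,
      fun x _ => ⟨0, Set.mem_singleton _, 0, fun Ω => hS.elim Ω⟩⟩
  have μ₀ : A.State := Classical.arbitrary _
  -- uniform bound on distances to μ₀
  obtain ⟨G, hG⟩ := exists_net hL2 (ε₁ := 1) zero_lt_one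
  set Re : ℝ≥0∞ := (G.sup fun g => A.rho L μ₀ g) + 1 with hRe
  have hRefin : Re ≠ ⊤ := by
    rw [hRe]
    refine (ENNReal.add_lt_top.2 ⟨?_, ENNReal.one_lt_top⟩).ne
    rw [Finset.sup_lt_iff (by simp : (⊥:ℝ≥0∞) < ⊤)]
    exact fun g _ => (rho_ne_top hL2 μ₀ g).lt_top
  have hball : ∀ ω : A.State, A.rho L μ₀ ω ≤ Re := by
    intro ω
    obtain ⟨g, hg, hlt⟩ := hG ω
    calc A.rho L μ₀ ω ≤ A.rho L μ₀ g + A.rho L g ω := rho_triangle L μ₀ g ω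
      _ ≤ (G.sup fun g => A.rho L μ₀ g) + 1 :=
          add_le_add (Finset.le_sup hg) hlt.le
  set R := Re.toReal with hR
  have hbound : ∀ (ω : A.State) (x : A.carrier), L x ≤ 1 → |ω.1 x - μ₀.1 x| ≤ R := by
    intro ω x hx
    have h1 : ENNReal.ofReal |μ₀.1 x - ω.1 x| ≤ Re :=
      le_trans (ofReal_abs_le_rho L μ₀ ω hx) (hball ω)
    have h2 := ENNReal.toReal_mono hRefin h1
    rw [ENNReal.toReal_ofReal (abs_nonneg _)] at h2
    rwa [abs_sub_comm]
  -- net of the state space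
  obtain ⟨F', hF'⟩ := exists_net hL2 (ε₁ := ENNReal.ofReal (γ/3))
    (ENNReal.ofReal_pos.2 (by linarith))
  set Ψ : A.carrier → (↥F' → ℝ) := fun a ω => ω.1.1 a - μ₀.1 a with hΨ
  have htb : TotallyBounded (Ψ '' {a | L a ≤ 1}) := by
    refine TotallyBounded.subset ?_
      (isCompact_univ_pi fun _ => isCompact_Icc (a := -R) (b := R)).totallyBounded
    rintro _ ⟨a, ha, rfl⟩ ω _
    exact abs_le.1 (hbound ω.1 a ha)
  obtain ⟨t, htsub, htfin, hcover⟩ := totallyBounded_iff_subset.1 htb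
    {p | dist p.1 p.2 < γ/3} (Metric.dist_mem_uniformity (by linarith))
  have hex : ∀ y ∈ t, ∃ a', L a' ≤ 1 ∧ Ψ a' = y := by
    intro y hy
    obtain ⟨a', ha', rfl⟩ := htsub hy
    exact ⟨a', ha', rfl⟩
  choose! g hg1 hg2 using hex
  refine ⟨g '' t, htfin.image g, fun x hx => ?_⟩
  have hxmem : Ψ x ∈ ⋃ y ∈ t, {z | (z, y) ∈ {p : (↥F' → ℝ) × (↥F' → ℝ) | dist p.1 p.2 < γ/3}} :=
    hcover ⟨x, hx, rfl⟩
  simp only [Set.mem_iUnion, Set.mem_setOf_eq] at hxmem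
  obtain ⟨y, hy, hdist⟩ := hxmem
  set a' := g y with ha'
  refine ⟨a', ⟨y, hy, rfl⟩, μ₀.1 x - μ₀.1 a', fun Ω => ?_⟩
  have hcoord : ∀ ω : ↥F', |ω.1.1 x - ω.1.1 a' - (μ₀.1 x - μ₀.1 a')| ≤ γ/3 := by
    intro ω
    have h1 : dist (Ψ x ω) (Ψ a' ω) ≤ dist (Ψ x) (Ψ a') := dist_le_pi_dist _ _ ω
    have hda : dist (Ψ x) (Ψ a') < γ/3 := by
      rw [ha', hg2 y hy]; exact hdist
    have h2 : dist (Ψ x ω) (Ψ a' ω) ≤ γ/3 := le_trans h1 (le_of_lt hda)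
    rw [Real.dist_eq] at h2
    have h3 : Ψ x ω - Ψ a' ω = ω.1.1 x - ω.1.1 a' - (μ₀.1 x - μ₀.1 a') := by
      simp only [hΨ]; ring
    rwa [h3] at h2
  obtain ⟨μ, hμ, hμlt⟩ := hF' Ω
  have hne : A.rho L μ Ω ≠ ⊤ := (lt_of_lt_of_le hμlt le_top).ne
  have htr : (A.rho L μ Ω).toReal ≤ γ/3 := by
    have := ENNReal.toReal_mono (ENNReal.ofReal_ne_top) hμlt.le
    rwa [ENNReal.toReal_ofReal (by linarith)] at this
  have hb1 : |Ω.1 x - μ.1 x| ≤ γ/3 := by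
    have := abs_le_toReal_rho hlip μ Ω x hne
    rw [abs_sub_comm]
    calc |μ.1 x - Ω.1 x| ≤ (A.rho L μ Ω).toReal * L x := this
      _ ≤ (γ/3) * 1 := mul_le_mul htr hx (apply_nonneg L x) (by linarith)
      _ = γ/3 := mul_one _
  have hb2 : |Ω.1 a' - μ.1 a'| ≤ γ/3 := by
    have := abs_le_toReal_rho hlip μ Ω a' hne
    rw [abs_sub_comm]
    calc |μ.1 a' - Ω.1 a'| ≤ (A.rho L μ Ω).toReal * L a' := this
      _ ≤ (γ/3) * 1 := mul_le_mul htr (hg1 y hy) (apply_nonneg L a') (by linarith)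
      _ = γ/3 := mul_one _
  have hb3 := hcoord ⟨μ, hμ⟩
  have hsplit : Ω.1 x - Ω.1 a' - (μ₀.1 x - μ₀.1 a') =
      (μ.1 x - μ.1 a' - (μ₀.1 x - μ₀.1 a')) + (Ω.1 x - μ.1 x) - (Ω.1 a' - μ.1 a') := by
    ring
  rw [hsplit]
  calc |(μ.1 x - μ.1 a' - (μ₀.1 x - μ₀.1 a')) + (Ω.1 x - μ.1 x) - (Ω.1 a' - μ.1 a')|
      ≤ |μ.1 x - μ.1 a' - (μ₀.1 x - μ₀.1 a')| + |Ω.1 x - μ.1 x| + |Ω.1 a' - μ.1 a'| := by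
        have h1 := abs_add_le (μ.1 x - μ.1 a' - (μ₀.1 x - μ₀.1 a')) (Ω.1 x - μ.1 x)
        have h2 := abs_sub ((μ.1 x - μ.1 a' - (μ₀.1 x - μ₀.1 a')) + (Ω.1 x - μ.1 x))
          (Ω.1 a' - μ.1 a')
        linarith
    _ ≤ γ/3 + γ/3 + γ/3 := by
        have := hb3
        gcongr
    _ = γ := by ring

/-- The net lemma for the quotient `BS F`. -/
theorem netB {L : Seminorm ℝ A.carrier} (hlip : A.IsLipschitz L)
    (hL2 : ballTopology (A.rho L) = (inferInstance : TopologicalSpace A.State))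
    (F : Finset A.State) :
    ∀ γ : ℝ, 0 < γ → ∃ T : Set (A.BS F).carrier, T.Finite ∧ ∀ b, LBS L F b ≤ 1 →
      ∃ b' ∈ T, ∃ t : ℝ, ∀ ν : (A.BS F).State, |ν.1 b - ν.1 b' - t| ≤ γ := by
  intro γ hγ
  obtain ⟨T, hTfin, hT⟩ := netA hlip hL2 (γ/2) (by linarith)
  refine ⟨(fun a' => proj A F ((2:ℝ) • a')) '' T, hTfin.image _, fun b hb => ?_⟩
  have hlt : quotientSeminorm (proj A F) (fun x => L x) b < 2 :=
    lt_of_le_of_lt hb one_lt_two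
  obtain ⟨a, ha, hla⟩ := qs_lt (proj A F) (proj_surj F) L hlt
  set x := (2⁻¹ : ℝ) • a with hx
  have hLx : L x ≤ 1 := by
    rw [hx, map_smul_eq_mul, Real.norm_eq_abs]
    rw [abs_of_pos (by norm_num : (0:ℝ) < 2⁻¹)]
    linarith
  obtain ⟨y, hy, t', ht'⟩ := hT x hLx
  refine ⟨proj A F ((2:ℝ) • y), ⟨y, hy, rfl⟩, 2 * t', fun ν => ?_⟩
  have hΩ := ht' (pullB ν)
  have he1 : ν.1 b = 2 * (pullB ν).1 x := by
    rw [pullB_apply, hx, map_smul, map_smul, ← ha]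
    simp only [smul_eq_mul]
    ring
  have he2 : ν.1 (proj A F ((2:ℝ) • y)) = 2 * (pullB ν).1 y := by
    rw [pullB_apply, map_smul, map_smul]
    simp only [smul_eq_mul]
  rw [he1, he2]
  have : 2 * (pullB ν).1 x - 2 * (pullB ν).1 y - 2 * t' =
      2 * ((pullB ν).1 x - (pullB ν).1 y - t') := by ring
  rw [this, abs_mul, abs_two]
  linarith [hΩ, abs_nonneg ((pullB ν).1 x - (pullB ν).1 y - t')]


end

section
variable (A B : OrderUnitSpace)
variable {A B}

/-- decomposition estimate, first component -/
lemma decompA (Ω : (A.prod B).State) {z : A.carrier} {γ : ℝ} (hγ : 0 ≤ γ)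
    (h : ∀ μ : A.State, |μ.1 z| ≤ γ) : |Ω.1 (z, 0)| ≤ γ := by
  set s := Ω.1 (A.e, 0) with hs
  have hs0 : 0 ≤ s := Ω.2.2 _ (by
    rw [Prod.le_def]
    exact ⟨A.e_nonneg, le_refl 0⟩)
  have hsum : s + Ω.1 (0, B.e) = 1 := by
    rw [hs, ← map_add]
    have : ((A.e, 0) : A.carrier × B.carrier) + (0, B.e) = (A.e, B.e) := by
      simp
    rw [this]
    exact Ω.2.1
  have hs1 : s ≤ 1 := by
    have h2 : 0 ≤ Ω.1 (0, B.e) := Ω.2.2 _ (by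
      rw [Prod.le_def]
      exact ⟨le_refl 0, B.e_nonneg⟩)
    linarith
  rcases eq_or_lt_of_le hs0 with hzero | hpos
  · -- s = 0 : Ω kills the A-component
    obtain ⟨r1, hr1⟩ := A.orderUnit z
    obtain ⟨r2, hr2⟩ := A.orderUnit (-z)
    have key : ∀ (w : A.carrier) (r : ℝ), w ≤ r • A.e → Ω.1 (w, 0) ≤ r * s := by
      intro w r hw
      have hle : ((w, 0) : A.carrier × B.carrier) ≤ r • (A.e, (0:B.carrier)) := by
        rw [Prod.le_def]
        constructor
        · exact hw
        · simp
      have h0 : (0 : A.carrier × B.carrier) ≤ r • ((A.e, (0:B.carrier))) - (w, 0) := by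
        exact sub_nonneg' (A := A.prod B) hle
      have h1 : 0 ≤ Ω.1 (r • ((A.e, (0:B.carrier))) - (w, 0)) := Ω.2.2 _ h0
      rw [map_sub, map_smul, smul_eq_mul] at h1
      rw [hs]
      linarith
    have k1 : Ω.1 (z, 0) ≤ r1 * s := key z r1 hr1
    have k2 : Ω.1 (-z, 0) ≤ r2 * s := key (-z) r2 hr2
    have hneg : Ω.1 (-z, 0) = -Ω.1 (z, 0) := by
      have : ((-z, 0) : A.carrier × B.carrier) = -(z, 0) := by simp
      rw [this, map_neg]
    rw [hneg] at k2
    rw [← hzero] at k1 k2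
    simp only [mul_zero] at k1 k2
    have : Ω.1 (z, 0) = 0 := le_antisymm k1 (by linarith)
    rw [this]
    simpa using hγ
  · -- s > 0 : normalize to get a state of A
    set μlin : A.carrier →ₗ[ℝ] ℝ := s⁻¹ • (Ω.1.comp (LinearMap.inl ℝ A.carrier B.carrier))
      with hμlin
    have hμe : μlin A.e = 1 := by
      rw [hμlin]
      simp only [LinearMap.smul_apply, LinearMap.comp_apply, LinearMap.inl_apply, smul_eq_mul]
      rw [← hs]
      exact inv_mul_cancel₀ (ne_of_gt hpos)
    have hμpos : ∀ a : A.carrier, 0 ≤ a → 0 ≤ μlin a := by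
      intro a ha
      rw [hμlin]
      simp only [LinearMap.smul_apply, LinearMap.comp_apply, LinearMap.inl_apply, smul_eq_mul]
      have : 0 ≤ Ω.1 (a, 0) := Ω.2.2 _ (by
        rw [Prod.le_def]
        exact ⟨ha, le_refl 0⟩)
      exact mul_nonneg (inv_nonneg.2 hs0) this
    have hμ := h ⟨μlin, hμe, hμpos⟩
    have hval : μlin z = s⁻¹ * Ω.1 (z, 0) := by
      rw [hμlin]
      simp only [LinearMap.smul_apply, LinearMap.comp_apply, LinearMap.inl_apply, smul_eq_mul]
    rw [hval, abs_mul, abs_of_pos (inv_pos.2 hpos)] at hμ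
    calc |Ω.1 (z, 0)| = s * (s⁻¹ * |Ω.1 (z, 0)|) := by field_simp
      _ ≤ s * γ := mul_le_mul_of_nonneg_left hμ hs0
      _ ≤ 1 * γ := mul_le_mul_of_nonneg_right hs1 hγ
      _ = γ := one_mul γ

/-- decomposition estimate, second component -/
lemma decompB (Ω : (A.prod B).State) {z : B.carrier} {γ : ℝ} (hγ : 0 ≤ γ)
    (h : ∀ ν : B.State, |ν.1 z| ≤ γ) : |Ω.1 (0, z)| ≤ γ := by
  set s := Ω.1 (0, B.e) with hs
  have hs0 : 0 ≤ s := Ω.2.2 _ (by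
    rw [Prod.le_def]
    exact ⟨le_refl 0, B.e_nonneg⟩)
  have hsum : Ω.1 (A.e, 0) + s = 1 := by
    rw [hs, ← map_add]
    have : ((A.e, 0) : A.carrier × B.carrier) + (0, B.e) = (A.e, B.e) := by simp
    rw [this]
    exact Ω.2.1
  have hs1 : s ≤ 1 := by
    have h2 : 0 ≤ Ω.1 (A.e, 0) := Ω.2.2 _ (by
      rw [Prod.le_def]
      exact ⟨A.e_nonneg, le_refl 0⟩)
    linarith
  rcases eq_or_lt_of_le hs0 with hzero | hpos
  · obtain ⟨r1, hr1⟩ := B.orderUnit z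
    obtain ⟨r2, hr2⟩ := B.orderUnit (-z)
    have key : ∀ (w : B.carrier) (r : ℝ), w ≤ r • B.e → Ω.1 (0, w) ≤ r * s := by
      intro w r hw
      have hle : ((0, w) : A.carrier × B.carrier) ≤ r • ((0:A.carrier), B.e) := by
        rw [Prod.le_def]
        constructor
        · simp
        · exact hw
      have h0 : (0 : A.carrier × B.carrier) ≤ r • (((0:A.carrier), B.e)) - (0, w) :=
        sub_nonneg' (A := A.prod B) hle
      have h1 : 0 ≤ Ω.1 (r • (((0:A.carrier), B.e)) - (0, w)) := Ω.2.2 _ h0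
      rw [map_sub, map_smul, smul_eq_mul] at h1
      rw [hs]
      linarith
    have k1 : Ω.1 (0, z) ≤ r1 * s := key z r1 hr1
    have k2 : Ω.1 (0, -z) ≤ r2 * s := key (-z) r2 hr2
    have hneg : Ω.1 (0, -z) = -Ω.1 (0, z) := by
      have : ((0, -z) : A.carrier × B.carrier) = -(0, z) := by simp
      rw [this, map_neg]
    rw [hneg] at k2
    rw [← hzero] at k1 k2
    simp only [mul_zero] at k1 k2
    have : Ω.1 (0, z) = 0 := le_antisymm k1 (by linarith)
    rw [this]
    simpa using hγ
  · set νlin : B.carrier →ₗ[ℝ] ℝ := s⁻¹ • (Ω.1.comp (LinearMap.inr ℝ A.carrier B.carrier))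
      with hνlin
    have hνe : νlin B.e = 1 := by
      rw [hνlin]
      simp only [LinearMap.smul_apply, LinearMap.comp_apply, LinearMap.inr_apply, smul_eq_mul]
      rw [← hs]
      exact inv_mul_cancel₀ (ne_of_gt hpos)
    have hνpos : ∀ b : B.carrier, 0 ≤ b → 0 ≤ νlin b := by
      intro b hb
      rw [hνlin]
      simp only [LinearMap.smul_apply, LinearMap.comp_apply, LinearMap.inr_apply, smul_eq_mul]
      have : 0 ≤ Ω.1 (0, b) := Ω.2.2 _ (by
        rw [Prod.le_def]
        exact ⟨le_refl 0, hb⟩)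
      exact mul_nonneg (inv_nonneg.2 hs0) this
    have hν := h ⟨νlin, hνe, hνpos⟩
    have hval : νlin z = s⁻¹ * Ω.1 (0, z) := by
      rw [hνlin]
      simp only [LinearMap.smul_apply, LinearMap.comp_apply, LinearMap.inr_apply, smul_eq_mul]
    rw [hval, abs_mul, abs_of_pos (inv_pos.2 hpos)] at hν
    calc |Ω.1 (0, z)| = s * (s⁻¹ * |Ω.1 (0, z)|) := by field_simp
      _ ≤ s * γ := mul_le_mul_of_nonneg_left hν hs0
      _ ≤ 1 * γ := mul_le_mul_of_nonneg_right hs1 hγ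
      _ = γ := one_mul γ


end

section

variable {A : OrderUnitSpace}

/-- the comparison linear map on the direct sum -/
noncomputable def gmap (A : OrderUnitSpace) (F : Finset A.State) :
    (A.prod (A.BS F)).carrier →ₗ[ℝ] (↥F → ℝ) :=
  (piMap A F).comp (LinearMap.fst ℝ A.carrier (A.BS F).carrier) -
    ((LinearMap.range (piMap A F)).subtype).comp
      (LinearMap.snd ℝ A.carrier (A.BS F).carrier)

lemma gmap_apply (F : Finset A.State) (x : (A.prod (A.BS F)).carrier) :
    gmap A F x = piMap A F x.1 - (x.2.1 : ↥F → ℝ) := rfl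

/-- the bridge seminorm on the direct sum -/
noncomputable def bridge (L : Seminorm ℝ A.carrier) (F : Finset A.State) (K : ℝ≥0) :
    Seminorm ℝ (A.prod (A.BS F)).carrier :=
  (L.comp (LinearMap.fst ℝ A.carrier (A.BS F).carrier)) ⊔
    ((LBS L F).comp (LinearMap.snd ℝ A.carrier (A.BS F).carrier)) ⊔
    (K • (normSeminorm ℝ (↥F → ℝ)).comp (gmap A F))

lemma bridge_apply (L : Seminorm ℝ A.carrier) (F : Finset A.State) (K : ℝ≥0)
    (x : (A.prod (A.BS F)).carrier) :
    bridge L F K x =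
      max (L x.1) (max (LBS L F x.2) ((K:ℝ) * ‖piMap A F x.1 - (x.2.1 : ↥F → ℝ)‖)) := by
  rw [bridge]
  rw [Seminorm.sup_apply, Seminorm.sup_apply]
  rw [Seminorm.comp_apply, Seminorm.comp_apply, Seminorm.smul_apply, Seminorm.comp_apply]
  rw [max_assoc]
  rfl

lemma bridge_fst_le (L : Seminorm ℝ A.carrier) (F : Finset A.State) (K : ℝ≥0)
    (x : (A.prod (A.BS F)).carrier) : L x.1 ≤ bridge L F K x := by
  rw [bridge_apply]; exact le_max_left _ _

lemma bridge_snd_le (L : Seminorm ℝ A.carrier) (F : Finset A.State) (K : ℝ≥0)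
    (x : (A.prod (A.BS F)).carrier) : LBS L F x.2 ≤ bridge L F K x := by
  rw [bridge_apply]; exact le_trans (le_max_left _ _) (le_max_right _ _)

lemma bridge_norm_le (L : Seminorm ℝ A.carrier) (F : Finset A.State) (K : ℝ≥0)
    (x : (A.prod (A.BS F)).carrier) :
    (K:ℝ) * ‖piMap A F x.1 - (x.2.1 : ↥F → ℝ)‖ ≤ bridge L F K x := by
  rw [bridge_apply]; exact le_trans (le_max_right _ _) (le_max_right _ _)

lemma norm_le_of_bridge_le {L : Seminorm ℝ A.carrier} {F : Finset A.State} {K : ℝ≥0}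
    (hK : 0 < (K:ℝ)) {x : (A.prod (A.BS F)).carrier} (hx : bridge L F K x ≤ 1) :
    ‖piMap A F x.1 - (x.2.1 : ↥F → ℝ)‖ ≤ (K:ℝ)⁻¹ := by
  have := le_trans (bridge_norm_le L F K x) hx
  rw [← le_div_iff₀' hK] at this
  rwa [one_div] at this

/-- the bridge is a Lipschitz seminorm -/
lemma bridge_lipschitz {L : Seminorm ℝ A.carrier} (hlip : A.IsLipschitz L)
    (hL2 : ballTopology (A.rho L) = (inferInstance : TopologicalSpace A.State))
    (F : Finset A.State) {K : ℝ≥0} (hK : 0 < (K:ℝ)) :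
    (A.prod (A.BS F)).IsLipschitz (bridge L F K) := by
  intro x
  constructor
  · intro hx
    rw [bridge_apply] at hx
    have h0L : 0 ≤ L x.1 := apply_nonneg L x.1
    have h0B : 0 ≤ LBS L F x.2 := apply_nonneg _ x.2
    have h0N : 0 ≤ (K:ℝ) * ‖piMap A F x.1 - (x.2.1 : ↥F → ℝ)‖ :=
      mul_nonneg hK.le (norm_nonneg _)
    have hL0 : L x.1 = 0 := le_antisymm (by rw [← hx]; exact le_max_left _ _) h0L
    have hN0 : ‖piMap A F x.1 - (x.2.1 : ↥F → ℝ)‖ = 0 := by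
      have : (K:ℝ) * ‖piMap A F x.1 - (x.2.1 : ↥F → ℝ)‖ = 0 := le_antisymm
        (by rw [← hx]; exact le_trans (le_max_right _ _) (le_max_right _ _)) h0N
      exact (mul_eq_zero.1 this).resolve_left (ne_of_gt hK)
    obtain ⟨t, ht⟩ := (hlip x.1).1 hL0
    have hsub : piMap A F x.1 = (x.2.1 : ↥F → ℝ) := by
      rwa [norm_sub_eq_zero_iff] at hN0
    refine ⟨t, ?_⟩
    have hx2 : x.2 = t • (A.BS F).e := by
      apply Subtype.ext
      rw [← hsub, ht, map_smul]
      rfl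
    have : x = (x.1, x.2) := rfl
    rw [this, ht, hx2]
    rfl
  · rintro ⟨t, ht⟩
    have hx1 : x.1 = t • A.e := congrArg Prod.fst ht
    have hx2 : x.2 = t • (A.BS F).e := congrArg Prod.snd ht
    rw [bridge_apply, hx1, hx2]
    have e1 : L (t • A.e) = 0 := by
      rw [map_smul_eq_mul]
      have : L A.e = 0 := (hlip A.e).2 ⟨1, (one_smul ℝ A.e).symm⟩
      rw [this, mul_zero]
    have e2 : LBS L F (t • (A.BS F).e) = 0 :=
      ((LBS_lipschitz hlip hL2 F) (t • (A.BS F).e)).2 ⟨t, rfl⟩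
    have e3 : piMap A F (t • A.e) = ((t • (A.BS F).e).1 : ↥F → ℝ) := by
      rw [map_smul]
      rfl
    rw [e1, e2, e3, sub_self, norm_zero, mul_zero]
    simp

/-- the bridge induces `L` via the first projection -/
lemma bridge_induces_fst {L : Seminorm ℝ A.carrier} (F : Finset A.State) {K : ℝ≥0}
    (a : A.carrier) :
    L a = sInf {r : ℝ | ∃ p : (A.prod (A.BS F)).carrier, p.1 = a ∧ bridge L F K p = r} := by
  have hne : {r : ℝ | ∃ p : (A.prod (A.BS F)).carrier, p.1 = a ∧ bridge L F K p = r}.Nonempty :=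
    ⟨bridge L F K (a, proj A F a), ⟨(a, proj A F a), rfl, rfl⟩⟩
  have hbdd : BddBelow {r : ℝ | ∃ p : (A.prod (A.BS F)).carrier, p.1 = a ∧ bridge L F K p = r} := by
    refine ⟨0, fun r hr => ?_⟩
    obtain ⟨p, _, rfl⟩ := hr
    exact apply_nonneg _ p
  refine le_antisymm (le_csInf hne ?_) (csInf_le hbdd ?_)
  · rintro r ⟨p, hp, rfl⟩
    rw [← hp]
    exact bridge_fst_le L F K p
  · refine ⟨(a, proj A F a), rfl, ?_⟩
    rw [bridge_apply]
    have e1 : LBS L F (proj A F a) ≤ L a := qs_le (proj A F) (proj_surj F) L rfl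
    have e2 : piMap A F a - ((proj A F a).1 : ↥F → ℝ) = 0 := by
      rw [sub_eq_zero]
      rfl
    show max (L a) (max (LBS L F (proj A F a))
      ((K:ℝ) * ‖piMap A F a - ((proj A F a).1 : ↥F → ℝ)‖)) = L a
    rw [e2, norm_zero, mul_zero]
    rw [max_eq_left (apply_nonneg _ _), max_eq_left e1]

/-- the bridge induces `LBS` via the second projection -/
lemma bridge_induces_snd {L : Seminorm ℝ A.carrier} (F : Finset A.State) {K : ℝ≥0}
    (b : (A.BS F).carrier) :
    LBS L F b = sInf {r : ℝ | ∃ p : (A.prod (A.BS F)).carrier, p.2 = b ∧ bridge L F K p = r} := by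
  have hne : {r : ℝ | ∃ p : (A.prod (A.BS F)).carrier, p.2 = b ∧ bridge L F K p = r}.Nonempty := by
    obtain ⟨a, ha⟩ := proj_surj F b
    exact ⟨bridge L F K (a, b), ⟨(a, b), rfl, rfl⟩⟩
  have hbdd : BddBelow {r : ℝ | ∃ p : (A.prod (A.BS F)).carrier, p.2 = b ∧ bridge L F K p = r} := by
    refine ⟨0, fun r hr => ?_⟩
    obtain ⟨p, _, rfl⟩ := hr
    exact apply_nonneg _ p
  refine le_antisymm (le_csInf hne ?_) ?_
  · rintro r ⟨p, hp, rfl⟩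
    rw [← hp]
    exact bridge_snd_le L F K p
  · refine le_of_forall_pos_le_add fun ε hε => ?_
    have hlt : quotientSeminorm (proj A F) (fun x => L x) b < LBS L F b + ε :=
      lt_add_of_pos_right _ hε
    obtain ⟨a, ha, hla⟩ := qs_lt (proj A F) (proj_surj F) L hlt
    have hmem : bridge L F K (a, b) ∈
        {r : ℝ | ∃ p : (A.prod (A.BS F)).carrier, p.2 = b ∧ bridge L F K p = r} :=
      ⟨(a, b), rfl, rfl⟩
    refine le_trans (csInf_le hbdd hmem) ?_
    rw [bridge_apply]
    have e2 : piMap A F a - (b.1 : ↥F → ℝ) = 0 := by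
      rw [sub_eq_zero, ← ha]
      rfl
    show max (L a) (max (LBS L F b) ((K:ℝ) * ‖piMap A F a - (b.1 : ↥F → ℝ)‖)) ≤ LBS L F b + ε
    rw [e2, norm_zero, mul_zero]
    rw [max_eq_left (apply_nonneg _ _)]
    exact max_le hla.le (by linarith [hε])

/-- the net property for the bridge seminorm -/
theorem netAB {L : Seminorm ℝ A.carrier} (hlip : A.IsLipschitz L)
    (hL2 : ballTopology (A.rho L) = (inferInstance : TopologicalSpace A.State))
    (F : Finset A.State) {K : ℝ≥0} (hK : 0 < (K:ℝ)) :
    ∀ γ : ℝ, 0 < γ → ∃ T : Set (A.prod (A.BS F)).carrier, T.Finite ∧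
      ∀ x, bridge L F K x ≤ 1 → ∃ y ∈ T, ∃ t : ℝ,
        ∀ Ω : (A.prod (A.BS F)).State, |Ω.1 x - Ω.1 y - t| ≤ γ := by
  intro γ hγ
  set γ₁ := γ / 2 with hγ₁
  have hγ₁pos : 0 < γ₁ := by rw [hγ₁]; linarith
  obtain ⟨TA, hTAfin, hTA⟩ := netA hlip hL2 γ₁ hγ₁pos
  set R₀ : ℝ := γ₁ + (K:ℝ)⁻¹ with hR₀
  have hR₀pos : 0 < R₀ := by positivity
  -- a net for the bounded part of `BS F`
  have htb : TotallyBounded {w : ↥F → ℝ | w ∈ LinearMap.range (piMap A F) ∧ ‖w‖ ≤ R₀} := by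
    refine TotallyBounded.subset ?_
      (isCompact_univ_pi fun _ => isCompact_Icc (a := -R₀) (b := R₀)).totallyBounded
    rintro w ⟨_, hw⟩ ω _
    have := norm_le_pi_norm w ω
    rw [Real.norm_eq_abs] at this
    exact abs_le.1 (le_trans this hw)
  obtain ⟨t, htsub, htfin, hcover⟩ := totallyBounded_iff_subset.1 htb
    {p | dist p.1 p.2 < γ₁} (Metric.dist_mem_uniformity hγ₁pos)
  have hex : ∀ w ∈ t, ∃ v : (A.BS F).carrier, v.1 = w := by
    intro w hw
    exact ⟨⟨w, (htsub hw).1⟩, rfl⟩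
  choose! lift hlift using hex
  set T : Set (A.prod (A.BS F)).carrier :=
    Set.image2 (fun a' w => (a', proj A F a' + lift w)) TA t with hT
  refine ⟨T, Set.Finite.image2 _ hTAfin htfin, ?_⟩
  rintro ⟨a, b⟩ hx
  have hLa : L a ≤ 1 := le_trans (bridge_fst_le L F K (a, b)) hx
  obtain ⟨a', ha', t', ht'⟩ := hTA a hLa
  -- the element to approximate in `BS F`
  set c : (A.BS F).carrier := b - proj A F a' - t' • (A.BS F).e with hc
  have hcnorm : ‖(c.1 : ↥F → ℝ)‖ ≤ R₀ := by
    rw [pi_norm_le_iff_of_nonneg hR₀pos.le]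
    intro ω
    have hcoord : (c.1 : ↥F → ℝ) ω = b.1 ω - ω.1.1 a' - t' := by
      rw [hc]
      show (b.1 - (proj A F a').1 - (t' • (A.BS F).e).1) ω = _
      simp only [Pi.sub_apply]
      rw [BS_smul_e_coord, proj_coord]
    have h1 : |b.1 ω - ω.1.1 a| ≤ (K:ℝ)⁻¹ := by
      have hn := norm_le_of_bridge_le hK hx
      have := norm_le_pi_norm (piMap A F a - (b.1 : ↥F → ℝ)) ω
      rw [Real.norm_eq_abs] at this
      have h2 : (piMap A F a - (b.1 : ↥F → ℝ)) ω = ω.1.1 a - b.1 ω := rfl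
      rw [h2] at this
      rw [abs_sub_comm]
      exact le_trans this hn
    have h2 : |ω.1.1 a - ω.1.1 a' - t'| ≤ γ₁ := ht' ω.1
    rw [Real.norm_eq_abs, hcoord]
    have : b.1 ω - ω.1.1 a' - t' = (b.1 ω - ω.1.1 a) + (ω.1.1 a - ω.1.1 a' - t') := by ring
    rw [this]
    calc |(b.1 ω - ω.1.1 a) + (ω.1.1 a - ω.1.1 a' - t')|
        ≤ |b.1 ω - ω.1.1 a| + |ω.1.1 a - ω.1.1 a' - t'| := abs_add_le _ _
      _ ≤ (K:ℝ)⁻¹ + γ₁ := add_le_add h1 h2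
      _ = R₀ := by rw [hR₀]; ring
  have hcmem : (c.1 : ↥F → ℝ) ∈ {w : ↥F → ℝ | w ∈ LinearMap.range (piMap A F) ∧ ‖w‖ ≤ R₀} :=
    ⟨c.2, hcnorm⟩
  have := hcover hcmem
  simp only [Set.mem_iUnion, Set.mem_setOf_eq] at this
  obtain ⟨w, hw, hdw⟩ := this
  refine ⟨(a', proj A F a' + lift w), Set.mem_image2_of_mem ha' hw, t', fun Ω => ?_⟩
  -- split the difference
  have hze : ((a, b) : (A.prod (A.BS F)).carrier) - (a', proj A F a' + lift w) -
      t' • (A.prod (A.BS F)).e = (a - a' - t' • A.e, c - lift w) := by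
    show ((a, b) : A.carrier × (A.BS F).carrier) - (a', proj A F a' + lift w) -
      t' • (A.e, (A.BS F).e) = (a - a' - t' • A.e, c - lift w)
    rw [hc]
    show ((a - a' - t' • A.e, b - (proj A F a' + lift w) - t' • (A.BS F).e) :
        A.carrier × (A.BS F).carrier) =
      (a - a' - t' • A.e, b - proj A F a' - t' • (A.BS F).e - lift w)
    have h9 : b - (proj A F a' + lift w) - t' • (A.BS F).e =
        b - proj A F a' - t' • (A.BS F).e - lift w := by abel
    rw [h9]
  have hΩsplit : Ω.1 (a, b) - Ω.1 (a', proj A F a' + lift w) - t' =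
      Ω.1 (a - a' - t' • A.e, 0) + Ω.1 (0, c - lift w) := by
    have h1 : Ω.1 ((a, b) - (a', proj A F a' + lift w) - t' • (A.prod (A.BS F)).e) =
        Ω.1 (a, b) - Ω.1 (a', proj A F a' + lift w) - t' := by
      rw [map_sub, map_sub, map_smul, Ω.2.1, smul_eq_mul, mul_one]
    rw [← h1, hze]
    have h2 : ((a - a' - t' • A.e, c - lift w) : A.carrier × (A.BS F).carrier) =
        (a - a' - t' • A.e, 0) + (0, c - lift w) := by simp
    rw [h2, map_add]
  rw [hΩsplit]
  have hbd1 : |Ω.1 (a - a' - t' • A.e, 0)| ≤ γ₁ := by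
    refine decompA Ω hγ₁pos.le fun μ => ?_
    have : μ.1 (a - a' - t' • A.e) = μ.1 a - μ.1 a' - t' := by
      rw [map_sub, map_sub, map_smul, μ.2.1, smul_eq_mul, mul_one]
    rw [this]
    exact ht' μ
  have hbd2 : |Ω.1 (0, c - lift w)| ≤ γ₁ := by
    refine decompB Ω hγ₁pos.le fun ν => ?_
    have h3 : ‖((c - lift w).1 : ↥F → ℝ)‖ ≤ γ₁ := by
      have : ((c - lift w).1 : ↥F → ℝ) = c.1 - (lift w).1 := rfl
      rw [this, hlift w hw]
      rw [show (c.1 : ↥F → ℝ) - w = c.1 - w from rfl]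
      have := hdw
      rw [dist_eq_norm] at this
      exact this.le
    exact le_trans (BS_state_abs_le ν (c - lift w)) h3
  calc |Ω.1 (a - a' - t' • A.e, 0) + Ω.1 (0, c - lift w)|
      ≤ |Ω.1 (a - a' - t' • A.e, 0)| + |Ω.1 (0, c - lift w)| := abs_add_le _ _
    _ ≤ γ₁ + γ₁ := add_le_add hbd1 hbd2
    _ = γ := by rw [hγ₁]; ring


end

section
variable {A : OrderUnitSpace}

/-- evaluation at a coordinate gives a state of `BS F` -/
noncomputable def coordState {F : Finset A.State} (ω : ↥F) : (A.BS F).State :=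
  ⟨(LinearMap.proj ω).comp (LinearMap.range (piMap A F)).subtype, by
    constructor
    · exact BS_e_apply ω
    · intro b hb
      rw [BS_le_iff] at hb
      have := hb ω
      simpa using this⟩

lemma coordState_apply {F : Finset A.State} (ω : ↥F) (b : (A.BS F).carrier) :
    (coordState ω).1 b = b.1 ω := rfl


end

end OrderUnitSpace

open OrderUnitSpace


/-- **Finite approximation (Theorem 13.1 of Rieffel).** For every compact quantum
metric space `(A, L)` and every `ε > 0` there is a compact quantum metric space
`(B, L_B)` with `B` finite-dimensional and `dist_q(A, B) < ε`; moreover `(B, L_B)`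
can be taken to be a quotient of `(A, L)`, i.e. there is a surjective morphism
`π : A → B` with `L_B` the quotient seminorm of `L`. -/
theorem finite_approximation (A : OrderUnitSpace) (L : Seminorm ℝ A.carrier)
    (hL : A.IsLipNorm L) (ε : ℝ≥0∞) (hε : 0 < ε) :
    ∃ (B : OrderUnitSpace) (LB : Seminorm ℝ B.carrier) (π : A.carrier →ₗ[ℝ] B.carrier),
      FiniteDimensional ℝ B.carrier ∧ B.IsLipNorm LB ∧
      A.IsMorphism B π ∧ Function.Surjective π ∧
      Induces π (fun a => L a) (fun b => LB b) ∧
      A.distq B L LB < ε := by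
  obtain ⟨hlip, hL2⟩ := hL
  obtain ⟨η, hη, hηε⟩ : ∃ η : ℝ, 0 < η ∧ ENNReal.ofReal η < ε := by
    rcases eq_or_ne ε ⊤ with rfl | hne
    · exact ⟨1, one_pos, ENNReal.ofReal_lt_top⟩
    · refine ⟨ε.toReal / 2, ?_, ?_⟩
      · have := ENNReal.toReal_pos (ne_of_gt hε) hne
        linarith
      · rw [ENNReal.ofReal_lt_iff_lt_toReal (by positivity) hne]
        have := ENNReal.toReal_pos (ne_of_gt hε) hne
        linarith
  set K : ℝ≥0 := Real.toNNReal (3 / η) with hKdef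
  have hKval : (K : ℝ) = 3 / η := Real.coe_toNNReal _ (by positivity)
  have hKpos : 0 < (K : ℝ) := by rw [hKval]; positivity
  have hKinv : (K : ℝ)⁻¹ = η / 3 := by rw [hKval]; field_simp
  obtain ⟨F, hF⟩ := exists_net hL2 (ε₁ := ENNReal.ofReal (η / 3))
    (ENNReal.ofReal_pos.2 (by positivity))
  refine ⟨A.BS F, LBS L F, proj A F, BS_findim F,
    ⟨LBS_lipschitz hlip hL2 F, topeq (LBS_lipschitz hlip hL2 F) (netB hlip hL2 F)⟩,
    ⟨proj_e F, fun a ha => proj_pos F ha⟩, proj_surj F, fun b => rfl, ?_⟩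
  -- the distance estimate
  set L'' := bridge L F K with hL''
  have hadm : L'' ∈ A.admissible (A.BS F) L (LBS L F) := by
    refine ⟨⟨bridge_lipschitz hlip hL2 F hKpos,
      topeq (bridge_lipschitz hlip hL2 F hKpos) (netAB hlip hL2 F hKpos)⟩, ?_, ?_⟩
    · intro a
      exact bridge_induces_fst F a
    · intro b
      exact bridge_induces_snd F b
  have hH : hausdorffDistWith ((A.prod (A.BS F)).rho L'')
      (Set.range (A.leftState (A.BS F))) (Set.range (A.rightState (A.BS F))) ≤
      ENNReal.ofReal η := by
    rw [hausdorffDistWith]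
    apply max_le
    · refine iSup₂_le ?_
      rintro u ⟨μ, rfl⟩
      obtain ⟨ω, hω, hlt⟩ := hF μ
      set νω := coordState (⟨ω, hω⟩ : ↥F) with hνω
      refine le_trans (iInf₂_le (A.rightState (A.BS F) νω) ⟨νω, rfl⟩) ?_
      refine iSup_le fun x => ?_
      have hbr : bridge L F K x.1 ≤ 1 := x.2
      have hLa : L x.1.1 ≤ 1 := le_trans (bridge_fst_le L F K x.1) hbr
      have h1 : |ω.1 x.1.1 - μ.1 x.1.1| ≤ η / 3 := by
        have hne := (lt_of_lt_of_le hlt le_top).ne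
        have := abs_le_toReal_rho hlip ω μ x.1.1 hne
        have htr : (A.rho L ω μ).toReal ≤ η / 3 := by
          have h2 := ENNReal.toReal_mono ENNReal.ofReal_ne_top hlt.le
          rwa [ENNReal.toReal_ofReal (by positivity)] at h2
        calc |ω.1 x.1.1 - μ.1 x.1.1| ≤ (A.rho L ω μ).toReal * L x.1.1 := this
          _ ≤ (η/3) * 1 := mul_le_mul htr hLa (apply_nonneg L _) (by positivity)
          _ = η/3 := mul_one _
      have h2 : |ω.1 x.1.1 - x.1.2.1 ⟨ω, hω⟩| ≤ η / 3 := by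
        have hn := norm_le_of_bridge_le hKpos hbr
        have h3 := norm_le_pi_norm (piMap A F x.1.1 - (x.1.2.1 : ↥F → ℝ)) ⟨ω, hω⟩
        rw [Real.norm_eq_abs] at h3
        have h4 : (piMap A F x.1.1 - (x.1.2.1 : ↥F → ℝ)) ⟨ω, hω⟩ =
            ω.1 x.1.1 - x.1.2.1 ⟨ω, hω⟩ := rfl
        rw [h4] at h3
        rw [← hKinv]
        exact le_trans h3 hn
      have hval : ((A.leftState (A.BS F)) μ).1 x.1 = μ.1 x.1.1 := rfl
      have hval2 : ((A.rightState (A.BS F)) νω).1 x.1 = x.1.2.1 ⟨ω, hω⟩ := rfl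
      rw [hval, hval2]
      refine le_trans (ENNReal.ofReal_le_ofReal ?_) (le_refl (ENNReal.ofReal η))
      have hsplit : μ.1 x.1.1 - x.1.2.1 ⟨ω, hω⟩ =
          -(ω.1 x.1.1 - μ.1 x.1.1) + (ω.1 x.1.1 - x.1.2.1 ⟨ω, hω⟩) := by ring
      rw [hsplit]
      calc |(-(ω.1 x.1.1 - μ.1 x.1.1)) + (ω.1 x.1.1 - x.1.2.1 ⟨ω, hω⟩)|
          ≤ |(-(ω.1 x.1.1 - μ.1 x.1.1))| + |ω.1 x.1.1 - x.1.2.1 ⟨ω, hω⟩| := abs_add_le _ _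
        _ = |ω.1 x.1.1 - μ.1 x.1.1| + |ω.1 x.1.1 - x.1.2.1 ⟨ω, hω⟩| := by rw [abs_neg]
        _ ≤ η/3 + η/3 := add_le_add h1 h2
        _ ≤ η := by linarith
    · refine iSup₂_le ?_
      rintro u ⟨ν, rfl⟩
      refine le_trans (iInf₂_le (A.leftState (A.BS F) (pullB ν)) ⟨pullB ν, rfl⟩) ?_
      refine iSup_le fun x => ?_
      have hbr : bridge L F K x.1 ≤ 1 := x.2
      have hval : ((A.leftState (A.BS F)) (pullB ν)).1 x.1 = ν.1 (proj A F x.1.1) := rfl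
      have hval2 : ((A.rightState (A.BS F)) ν).1 x.1 = ν.1 x.1.2 := rfl
      rw [hval, hval2]
      have h5 : ν.1 (proj A F x.1.1) - ν.1 x.1.2 = ν.1 (proj A F x.1.1 - x.1.2) :=
        (map_sub ν.1 _ _).symm
      rw [h5]
      have h6 := BS_state_abs_le ν (proj A F x.1.1 - x.1.2)
      have h7 : ((proj A F x.1.1 - x.1.2).1 : ↥F → ℝ) =
          piMap A F x.1.1 - (x.1.2.1 : ↥F → ℝ) := rfl
      rw [h7] at h6
      have h8 := le_trans h6 (norm_le_of_bridge_le hKpos hbr)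
      refine ENNReal.ofReal_le_ofReal ?_
      rw [hKinv] at h8
      linarith
  have hdist : A.distq (A.BS F) L (LBS L F) ≤ ENNReal.ofReal η := by
    refine le_trans ?_ hH
    exact iInf₂_le L'' hadm
  exact lt_of_le_of_lt hdist hηε
end

section
/- If N is a bridge between compact quantum metric spaces (A,L_A) and (B,L_B), then the seminorm L on A ⊕ B defined by L(a,b) = max(L_A(a), L_B(b), N(a,b)) is a Lip-norm on A ⊕ B which induces L_A and L_B via the coordinate projections; that is, L ∈ M(L_A,L_B). -/
open scoped ENNReal

/-- A bridge between compact quantum metric spaces `(A, L_A)` and `(B, L_B)`: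
a seminorm `N` on `A ⊕ B` which is (1) continuous (i.e. bounded) for the order-unit
norm, (2) vanishes at `(e_A, e_B)` but not at `(e_A, 0)`, and (3) for every `a` and
`δ > 0` there is `b` with `max(L_B(b), N(a,b)) ≤ L_A(a) + δ`, and symmetrically. -/
def IsBridge (A B : OrderUnitSpace) (LA : Seminorm ℝ A.carrier) (LB : Seminorm ℝ B.carrier)
    (N : Seminorm ℝ (A.prod B).carrier) : Prop :=
  (∃ c : ℝ, ∀ p : A.carrier × B.carrier, N p ≤ c * (A.prod B).onorm p) ∧
  N (A.e, B.e) = 0 ∧ N (A.e, 0) ≠ 0 ∧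
  (∀ a : A.carrier, ∀ δ : ℝ, 0 < δ →
    ∃ b : B.carrier, max (LB b) (N (a, b)) ≤ LA a + δ) ∧
  (∀ b : B.carrier, ∀ δ : ℝ, 0 < δ →
    ∃ a : A.carrier, max (LA a) (N (a, b)) ≤ LB b + δ)


namespace OrderUnitSpace
variable (X : OrderUnitSpace)

instance cov1 : CovariantClass X.carrier X.carrier (· + ·) (· ≤ ·) :=
  ⟨fun c a b h => X.add_le_add_left' a b h c⟩

instance cov2 : CovariantClass X.carrier X.carrier (Function.swap (· + ·)) (· ≤ ·) :=
  ⟨fun c a b h => by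
    have := X.add_le_add_left' a b h c
    simpa [Function.swap, add_comm] using this⟩

theorem sub_nonneg_of_le {x y : X.carrier} (h : x ≤ y) : 0 ≤ y - x := by
  have := X.add_le_add_left' x y h (-x)
  simpa [sub_eq_neg_add] using this

theorem smul_le_smul {x y : X.carrier} {c : ℝ} (hc : 0 ≤ c) (h : x ≤ y) :
    c • x ≤ c • y := by
  apply X.le_of_sub_nonneg''
  have : c • y - c • x = c • (y - x) := by rw [smul_sub]
  rw [this]
  exact X.smul_nonneg' _ _ hc (X.sub_nonneg_of_le h)

section Ne
variable (he : X.e ≠ 0)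
include he

theorem scal_le_of_smul_e_le {t u : ℝ} (h : t • X.e ≤ u • X.e) : t ≤ u := by
  by_contra hlt
  push_neg at hlt
  have h0 : (0:X.carrier) ≤ (u - t) • X.e := by
    have := X.sub_nonneg_of_le h
    rwa [← sub_smul] at this
  have h1 : (0:X.carrier) ≤ ((t - u)⁻¹) • ((u - t) • X.e) :=
    X.smul_nonneg' _ _ (le_of_lt (inv_pos.mpr (by linarith))) h0
  rw [smul_smul] at h1
  have h2 : (t - u)⁻¹ * (u - t) = -1 := by
    rw [show u - t = -(t - u) by ring, mul_neg, inv_mul_cancel₀ (by linarith : t - u ≠ 0)]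
  rw [h2] at h1
  have h1' : (0:X.carrier) ≤ -X.e := by
    rw [neg_smul, one_smul] at h1; exact h1
  have h3 : X.e ≤ 0 := X.le_of_sub_nonneg'' (by simpa [zero_sub] using h1')
  exact he (le_antisymm h3 X.e_nonneg)

/-- the set of upper scalar bounds -/
def ub (x : X.carrier) : Set ℝ := {r : ℝ | x ≤ r • X.e}

omit he in
theorem ub_nonempty (x : X.carrier) : (X.ub x).Nonempty := X.orderUnit x

theorem ub_bddBelow (x : X.carrier) : BddBelow (X.ub x) := by
  obtain ⟨r₀, hr₀⟩ := X.orderUnit (-x)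
  refine ⟨-r₀, fun r hr => ?_⟩
  have h1 : (0:X.carrier) ≤ (r + r₀) • X.e := by
    have := add_le_add hr hr₀
    have h2 : x + -x = 0 := by abel
    rw [h2, ← add_smul] at this
    exact this
  have := X.scal_le_of_smul_e_le he (by simpa using h1 : (0:ℝ) • X.e ≤ (r + r₀) • X.e)
  linarith

/-- `mval x = inf { r | x ≤ r e }`. -/
noncomputable def mval (x : X.carrier) : ℝ := sInf (X.ub x)

theorem le_mval_smul_e (x : X.carrier) : x ≤ X.mval x • X.e := by
  have key : ∀ r : ℝ, 0 < r → x - X.mval x • X.e ≤ r • X.e := by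
    intro r hr
    obtain ⟨s, hs, hslt⟩ := (csInf_lt_iff (X.ub_bddBelow he x) (X.ub_nonempty x)).mp
      (lt_add_of_pos_right (X.mval x) hr)
    have hxs : x ≤ s • X.e := hs
    have : x ≤ (X.mval x + r) • X.e := hxs.trans (X.smul_e_mono hslt.le)
    rw [add_smul] at this
    have := X.sub_nonneg_of_le this
    apply X.le_of_sub_nonneg''
    have h3 : r • X.e - (x - X.mval x • X.e) = X.mval x • X.e + r • X.e - x := by abel
    rw [h3]
    exact this
  have h := X.arch _ key
  apply X.le_of_sub_nonneg''
  have := X.sub_nonneg_of_le h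
  simpa [zero_sub, neg_sub] using this

theorem mval_le_iff {x : X.carrier} {r : ℝ} : X.mval x ≤ r ↔ x ≤ r • X.e := by
  constructor
  · intro h
    exact (X.le_mval_smul_e he x).trans (X.smul_e_mono h)
  · intro h
    exact csInf_le (X.ub_bddBelow he x) h

theorem mval_smul_e (r : ℝ) : X.mval (r • X.e) = r := by
  have h1 : X.mval (r • X.e) ≤ r := (X.mval_le_iff he).mpr le_rfl
  have h2 : r ≤ X.mval (r • X.e) :=
    X.scal_le_of_smul_e_le he (X.le_mval_smul_e he (r • X.e))
  linarith

theorem mval_add_le (x y : X.carrier) : X.mval (x + y) ≤ X.mval x + X.mval y := by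
  rw [X.mval_le_iff he, add_smul]
  exact add_le_add (X.le_mval_smul_e he x) (X.le_mval_smul_e he y)

theorem mval_smul {c : ℝ} (hc : 0 < c) (x : X.carrier) : X.mval (c • x) = c * X.mval x := by
  have h1 : ∀ (d : ℝ) (y : X.carrier), 0 < d → X.mval (d • y) ≤ d * X.mval y := by
    intro d y hd
    rw [X.mval_le_iff he, mul_smul]
    exact X.smul_le_smul hd.le (X.le_mval_smul_e he y)
  have h2 := h1 c x hc
  have h3 := h1 c⁻¹ (c • x) (by positivity)
  rw [smul_smul, inv_mul_cancel₀ hc.ne', one_smul] at h3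
  have h4 := mul_le_mul_of_nonneg_left h3 hc.le
  rw [← mul_assoc, mul_inv_cancel₀ hc.ne', one_mul] at h4
  linarith

theorem mval_nonpos_of_nonpos {x : X.carrier} (hx : x ≤ 0) : X.mval x ≤ 0 := by
  rw [X.mval_le_iff he]
  simpa using hx

theorem neg_mval_le (x : X.carrier) : -X.mval (-x) ≤ X.mval x := by
  have h := X.mval_add_le he x (-x)
  have h0 : X.mval (x + -x) = 0 := by
    have : x + -x = (0:ℝ) • X.e := by simp
    rw [this, X.mval_smul_e he]
  rw [h0] at h
  linarith

theorem pos_apply_le (f : X.carrier →ₗ[ℝ] ℝ) (hf : ∀ x : X.carrier, 0 ≤ x → 0 ≤ f x)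
    (x : X.carrier) : f x ≤ X.mval x * f X.e := by
  have h := hf _ (X.sub_nonneg_of_le (X.le_mval_smul_e he x))
  rw [map_sub, map_smul] at h
  simp only [smul_eq_mul] at h
  linarith

theorem state_apply_le_mval (μ : X.State) (x : X.carrier) : μ.1 x ≤ X.mval x := by
  have := X.pos_apply_le he μ.1 μ.2.2 x
  rwa [μ.2.1, mul_one] at this

theorem neg_mval_neg_le_state (μ : X.State) (x : X.carrier) :
    -X.mval (-x) ≤ μ.1 x := by
  have := X.state_apply_le_mval he μ (-x)
  rw [map_neg] at this
  linarith

omit he in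
theorem pos_functional_zero (f : X.carrier →ₗ[ℝ] ℝ) (hf : ∀ x : X.carrier, 0 ≤ x → 0 ≤ f x)
    (hfe : f X.e = 0) (x : X.carrier) : f x = 0 := by
  rcases eq_or_ne X.e 0 with h0 | he
  · -- carrier is trivial
    have hx0 : x = 0 := by
      have h1 : x ≤ (0:X.carrier) := by
        have := X.arch x (fun r hr => by
          obtain ⟨s, hs⟩ := X.orderUnit x
          simpa [h0] using hs)
        exact this
      have h2 : (-x) ≤ (0:X.carrier) := by
        have := X.arch (-x) (fun r hr => by
          obtain ⟨s, hs⟩ := X.orderUnit (-x)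
          simpa [h0] using hs)
        exact this
      have h3 : (0:X.carrier) ≤ x := by
        have := X.sub_nonneg_of_le h2
        simpa using this
      exact le_antisymm h1 h3
    simp [hx0]
  · have h1 := X.pos_apply_le he f hf x
    have h2 := X.pos_apply_le he f hf (-x)
    rw [map_neg] at h2
    rw [hfe, mul_zero] at h1 h2
    linarith

theorem mval_e : X.mval X.e = 1 := by
  have := X.mval_smul_e he 1
  rwa [one_smul] at this

theorem exists_state_eq_mval {x : X.carrier} (hx : x ≠ 0) :
    ∃ μ : X.State, μ.1 x = X.mval x := by
  obtain ⟨g, hg1, hg2⟩ := exists_extension_of_le_sublinear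
    (LinearPMap.mkSpanSingleton x (X.mval x) hx) X.mval
    (fun c hc y => X.mval_smul he hc y) (X.mval_add_le he)
    (by
      rintro ⟨z, hz⟩
      have hz' : z ∈ Submodule.span ℝ ({x} : Set X.carrier) := hz
      obtain ⟨c, rfl⟩ := Submodule.mem_span_singleton.mp hz'
      have happ : (LinearPMap.mkSpanSingleton x (X.mval x) hx) ⟨c • x, hz⟩ = c • X.mval x :=
        LinearPMap.mkSpanSingleton'_apply x (X.mval x) _ c hz
      rw [happ]
      simp only [smul_eq_mul]
      show c * X.mval x ≤ X.mval (c • x)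
      rcases lt_trichotomy c 0 with hc | hc | hc
      · have h2 := X.neg_mval_le he (c • x)
        have h3 : -(c • x) = (-c) • x := by simp
        rw [h3, X.mval_smul he (by linarith) x] at h2
        linarith
      · subst hc
        have h0 : (0:ℝ) • x = (0:ℝ) • X.e := by simp
        rw [zero_mul, h0, X.mval_smul_e he]
      · rw [X.mval_smul he hc x])
  have hge : g X.e = 1 := by
    have h1 : g X.e ≤ 1 := by
      have := hg2 X.e; rwa [X.mval_e he] at this
    have h2 : g ((-1:ℝ) • X.e) ≤ -1 := by
      have := hg2 ((-1:ℝ) • X.e); rwa [X.mval_smul_e he] at this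
    rw [map_smul, smul_eq_mul] at h2
    linarith
  have hgpos : ∀ y : X.carrier, 0 ≤ y → 0 ≤ g y := by
    intro y hy
    have h1 : g (-y) ≤ X.mval (-y) := hg2 (-y)
    have h2 : X.mval (-y) ≤ 0 := X.mval_nonpos_of_nonpos he (by simpa using X.sub_nonneg_of_le hy)
    rw [map_neg] at h1
    linarith
  refine ⟨⟨g, hge, hgpos⟩, ?_⟩
  have hx_mem : x ∈ Submodule.span ℝ ({x} : Set X.carrier) := Submodule.mem_span_singleton_self x
  have h5 := hg1 ⟨x, hx_mem⟩
  have h6 : (LinearPMap.mkSpanSingleton x (X.mval x) hx : X.carrier →ₗ.[ℝ] ℝ) ⟨x, hx_mem⟩ = X.mval x :=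
    LinearPMap.mkSpanSingleton_apply ℝ ℝ (σ := RingHom.id ℝ) hx (X.mval x)
  show g x = X.mval x
  rw [h5, h6]

theorem state_nonempty : Nonempty X.State := by
  obtain ⟨μ, _⟩ := X.exists_state_eq_mval he (x := X.e) (by exact he)
  exact ⟨μ⟩

theorem le_smul_e_of_forall_state {x : X.carrier} {r : ℝ}
    (h : ∀ μ : X.State, μ.1 x ≤ r) : x ≤ r • X.e := by
  rcases eq_or_ne x 0 with rfl | hx
  · obtain ⟨μ⟩ := X.state_nonempty he
    have h0 : (0:ℝ) ≤ r := by simpa using h μ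
    exact X.smul_nonneg' r X.e h0 X.e_nonneg
  · obtain ⟨μ, hμ⟩ := X.exists_state_eq_mval he hx
    have : X.mval x ≤ r := hμ ▸ h μ
    exact (X.le_mval_smul_e he x).trans (X.smul_e_mono this)

theorem abs_state_bounds {x : X.carrier} {r : ℝ}
    (h : ∀ μ : X.State, |μ.1 x| ≤ r) : -(r • X.e) ≤ x ∧ x ≤ r • X.e := by
  constructor
  · have h1 : -x ≤ r • X.e :=
      X.le_smul_e_of_forall_state he (fun μ => by
        have := h μ; rw [abs_le] at this; rw [map_neg]; linarith)
    have := X.sub_nonneg_of_le h1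
    apply X.le_of_sub_nonneg''
    have heq : x - -(r • X.e) = r • X.e - -x := by abel
    rw [heq]
    exact this
  · exact X.le_smul_e_of_forall_state he (fun μ => (le_abs_self _).trans (h μ))

end Ne
end OrderUnitSpace

theorem generate_isOpen_of_cover {α : Type*} {g : Set (Set α)} {V : Set α}
    (h : ∀ x ∈ V, ∃ u ∈ g, x ∈ u ∧ u ⊆ V) : TopologicalSpace.GenerateOpen g V := by
  have hV : V = ⋃₀ {u | u ∈ g ∧ u ⊆ V} := by
    ext x
    constructor
    · intro hx
      obtain ⟨u, hu, hxu, huV⟩ := h x hx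
      exact ⟨u, ⟨hu, huV⟩, hxu⟩
    · rintro ⟨u, ⟨_, huV⟩, hxu⟩
      exact huV hxu
  rw [hV]
  exact TopologicalSpace.GenerateOpen.sUnion _ (fun u hu => TopologicalSpace.GenerateOpen.basic u hu.1)

namespace OrderUnitSpace
variable (X : OrderUnitSpace)

theorem rho_self_s7 (L : Seminorm ℝ X.carrier) (μ : X.State) : X.rho L μ μ = 0 := by
  apply le_antisymm _ zero_le
  apply iSup_le
  rintro ⟨a, ha⟩
  simp

theorem rho_comm_s7 (L : Seminorm ℝ X.carrier) (μ ν : X.State) : X.rho L μ ν = X.rho L ν μ := by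
  simp only [rho, abs_sub_comm]

theorem ofReal_abs_le_rho_s7 (L : Seminorm ℝ X.carrier) (μ ν : X.State) {x : X.carrier}
    (hx : L x ≤ 1) : ENNReal.ofReal |μ.1 x - ν.1 x| ≤ X.rho L μ ν :=
  le_iSup_of_le (⟨x, hx⟩ : {a : X.carrier // L a ≤ 1}) le_rfl

theorem rho_triangle_s7 (L : Seminorm ℝ X.carrier) (μ κ ν : X.State) :
    X.rho L μ ν ≤ X.rho L μ κ + X.rho L κ ν := by
  rw [rho]
  apply iSup_le
  rintro ⟨a, ha⟩
  calc ENNReal.ofReal |μ.1 a - ν.1 a|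
      ≤ ENNReal.ofReal (|μ.1 a - κ.1 a| + |κ.1 a - ν.1 a|) :=
        ENNReal.ofReal_le_ofReal (abs_sub_le _ _ _)
    _ ≤ _ := by
        rw [ENNReal.ofReal_add (abs_nonneg _) (abs_nonneg _)]
        exact add_le_add (X.ofReal_abs_le_rho_s7 L μ κ ha) (X.ofReal_abs_le_rho_s7 L κ ν ha)

theorem abs_sub_ofReal_lip (L : Seminorm ℝ X.carrier) (hLip : X.IsLipschitz L)
    (μ ν : X.State) (x : X.carrier) :
    ENNReal.ofReal |μ.1 x - ν.1 x| ≤ ENNReal.ofReal (L x) * X.rho L μ ν := by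
  rcases eq_or_lt_of_le (apply_nonneg L x) with h0 | hpos
  · obtain ⟨t, rfl⟩ := (hLip x).mp h0.symm
    have h1 : μ.1 (t • X.e) = t := by rw [map_smul, smul_eq_mul, μ.2.1, mul_one]
    have h2 : ν.1 (t • X.e) = t := by rw [map_smul, smul_eq_mul, ν.2.1, mul_one]
    simp [h1, h2]
  · have hx : L ((L x)⁻¹ • x) ≤ 1 := by
      rw [map_smul_eq_mul, Real.norm_eq_abs, abs_of_pos (inv_pos.mpr hpos),
        inv_mul_cancel₀ hpos.ne']
    have h1 := X.ofReal_abs_le_rho_s7 L μ ν hx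
    have h2 : μ.1 ((L x)⁻¹ • x) - ν.1 ((L x)⁻¹ • x) = (L x)⁻¹ * (μ.1 x - ν.1 x) := by
      rw [map_smul, map_smul]; simp [mul_sub]
    rw [h2, abs_mul, abs_of_pos (inv_pos.mpr hpos)] at h1
    calc ENNReal.ofReal |μ.1 x - ν.1 x|
        = ENNReal.ofReal (L x) * ENNReal.ofReal ((L x)⁻¹ * |μ.1 x - ν.1 x|) := by
          rw [← ENNReal.ofReal_mul (apply_nonneg L x), ← mul_assoc,
            mul_inv_cancel₀ hpos.ne', one_mul]
      _ ≤ _ := mul_le_mul_right h1 _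

theorem continuous_eval (x : X.carrier) : Continuous fun μ : X.State => μ.1 x :=
  (continuous_apply x).comp continuous_induced_dom

theorem compactSpace_state_s7 : CompactSpace X.State := by
  classical
  set bu : X.carrier → ℝ := fun x => Classical.choose (X.orderUnit x) with hbu
  have hbu_spec : ∀ x : X.carrier, x ≤ bu x • X.e := fun x => Classical.choose_spec (X.orderUnit x)
  set K : Set (X.carrier → ℝ) := Set.pi Set.univ (fun x => Set.Icc (-(bu (-x))) (bu x)) with hK
  have hKcomp : IsCompact K := isCompact_univ_pi (fun x => isCompact_Icc)
  set T : Set (X.carrier → ℝ) := Set.range (fun μ : X.State => (μ.1 : X.carrier → ℝ)) with hT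
  have hTsub : T ⊆ K := by
    rintro _ ⟨μ, rfl⟩ x _
    constructor
    · have h1 := μ.2.2 _ (X.sub_nonneg_of_le (hbu_spec (-x)))
      rw [map_sub, map_smul, map_neg] at h1
      simp only [smul_eq_mul, μ.2.1, mul_one] at h1
      simpa using by linarith
    · have h1 := μ.2.2 _ (X.sub_nonneg_of_le (hbu_spec x))
      rw [map_sub, map_smul] at h1
      simp only [smul_eq_mul, μ.2.1, mul_one] at h1
      linarith
  have hTeq : T = {f : X.carrier → ℝ |
      (∀ x y : X.carrier, f (x + y) = f x + f y) ∧
      (∀ (c : ℝ) (x : X.carrier), f (c • x) = c * f x) ∧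
      f X.e = 1 ∧ ∀ x : X.carrier, 0 ≤ x → 0 ≤ f x} := by
    ext f
    constructor
    · rintro ⟨μ, rfl⟩
      refine ⟨fun x y => map_add μ.1 x y, fun c x => ?_, μ.2.1, fun x hx => μ.2.2 x hx⟩
      show μ.1 (c • x) = c * μ.1 x
      rw [map_smul]; simp
    · rintro ⟨h1, h2, h3, h4⟩
      exact ⟨⟨{ toFun := f, map_add' := h1, map_smul' := h2 }, h3, h4⟩, rfl⟩
  have hTclosed : IsClosed T := by
    rw [hTeq]
    have c1 : IsClosed {f : X.carrier → ℝ | ∀ x y : X.carrier, f (x + y) = f x + f y} := by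
      rw [Set.setOf_forall]
      refine isClosed_iInter (fun x => ?_)
      rw [Set.setOf_forall]
      refine isClosed_iInter (fun y => ?_)
      exact isClosed_eq (continuous_apply (x + y)) ((continuous_apply x).add (continuous_apply y))
    have c2 : IsClosed {f : X.carrier → ℝ | ∀ (c : ℝ) (x : X.carrier), f (c • x) = c * f x} := by
      rw [Set.setOf_forall]
      refine isClosed_iInter (fun c => ?_)
      rw [Set.setOf_forall]
      refine isClosed_iInter (fun x => ?_)
      exact isClosed_eq (continuous_apply (c • x)) (continuous_const.mul (continuous_apply x))
    have c3 : IsClosed {f : X.carrier → ℝ | f X.e = 1} :=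
      isClosed_eq (continuous_apply X.e) continuous_const
    have c4 : IsClosed {f : X.carrier → ℝ | ∀ x : X.carrier, 0 ≤ x → 0 ≤ f x} := by
      rw [Set.setOf_forall]
      refine isClosed_iInter (fun x => ?_)
      rcases Classical.em ((0:X.carrier) ≤ x) with hx | hx
      · simp only [hx, forall_true_left]
        exact isClosed_le continuous_const (continuous_apply x)
      · simp only [hx, IsEmpty.forall_iff]  -- {f | False → _} = univ
        exact isClosed_univ
    have : {f : X.carrier → ℝ |
        (∀ x y : X.carrier, f (x + y) = f x + f y) ∧
        (∀ (c : ℝ) (x : X.carrier), f (c • x) = c * f x) ∧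
        f X.e = 1 ∧ ∀ x : X.carrier, 0 ≤ x → 0 ≤ f x}
        = {f : X.carrier → ℝ | ∀ x y : X.carrier, f (x + y) = f x + f y}
          ∩ ({f : X.carrier → ℝ | ∀ (c : ℝ) (x : X.carrier), f (c • x) = c * f x}
          ∩ ({f : X.carrier → ℝ | f X.e = 1}
          ∩ {f : X.carrier → ℝ | ∀ x : X.carrier, 0 ≤ x → 0 ≤ f x})) := by
      ext f; simp [Set.mem_inter_iff, Set.mem_setOf_eq, and_assoc]
    rw [this]
    exact c1.inter (c2.inter (c3.inter c4))
  have hTcomp : IsCompact T := hKcomp.of_isClosed_subset hTclosed hTsub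
  have hemb : Topology.IsEmbedding (fun μ : X.State => (μ.1 : X.carrier → ℝ)) := by
    refine ⟨⟨rfl⟩, ?_⟩
    intro μ ν h
    exact Subtype.ext (DFunLike.coe_injective h)
  constructor
  rw [Topology.IsEmbedding.isCompact_iff hemb, Set.image_univ]
  exact hTcomp

theorem joined_states (μ ν : X.State) : Joined μ ν := by
  let st : unitInterval → X.State := fun t =>
    ⟨(1 - (t:ℝ)) • μ.1 + (t:ℝ) • ν.1, by
      constructor
      · simp only [LinearMap.add_apply, LinearMap.smul_apply, smul_eq_mul, μ.2.1, ν.2.1]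
        ring
      · intro x hx
        have h1 := μ.2.2 x hx
        have h2 := ν.2.2 x hx
        have ht0 := t.2.1
        have ht1 := t.2.2
        simp only [LinearMap.add_apply, LinearMap.smul_apply, smul_eq_mul]
        nlinarith⟩
  refine ⟨⟨⟨st, ?_⟩, ?_, ?_⟩⟩
  · apply continuous_induced_rng.2
    apply continuous_pi
    intro x
    show Continuous fun t : unitInterval => ((1 - (t:ℝ)) • μ.1 + (t:ℝ) • ν.1) x
    simp only [LinearMap.add_apply, LinearMap.smul_apply, smul_eq_mul]
    exact ((continuous_const.sub continuous_subtype_val).mul continuous_const).add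
      (continuous_subtype_val.mul continuous_const)
  · apply Subtype.ext
    show (1 - ((0 : unitInterval):ℝ)) • μ.1 + ((0 : unitInterval):ℝ) • ν.1 = μ.1
    simp
  · apply Subtype.ext
    show (1 - ((1 : unitInterval):ℝ)) • μ.1 + ((1 : unitInterval):ℝ) • ν.1 = ν.1
    simp

theorem ball_isOpen (L : Seminorm ℝ X.carrier) (hL : X.IsLipNorm L) (μ₀ : X.State)
    {ε : ℝ≥0∞} (hε : 0 < ε) : IsOpen {ν : X.State | X.rho L μ₀ ν < ε} := by
  have h : (ballTopology (X.rho L)).IsOpen {ν : X.State | X.rho L μ₀ ν < ε} :=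
    TopologicalSpace.GenerateOpen.basic _ ⟨μ₀, ε, hε, rfl⟩
  rw [hL.2] at h
  exact h

theorem exists_diam_bound (L : Seminorm ℝ X.carrier) (hL : X.IsLipNorm L) :
    ∃ D : ℝ, 0 ≤ D ∧ ∀ (μ ν : X.State) (a : X.carrier), L a ≤ 1 → |μ.1 a - ν.1 a| ≤ D := by
  rcases isEmpty_or_nonempty X.State with hempty | hne
  · exact ⟨0, le_rfl, fun μ => (hempty.false μ).elim⟩
  haveI := X.compactSpace_state_s7
  haveI : PathConnectedSpace X.State := ⟨hne, X.joined_states⟩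
  obtain ⟨μ₀⟩ := hne
  set G : Set X.State := {ν | X.rho L μ₀ ν < ⊤} with hG
  have hGopen : IsOpen G := by
    have hGeq : G = ⋃ n : ℕ, {ν | X.rho L μ₀ ν < (n:ℝ≥0∞) + 1} := by
      ext ν
      simp only [Set.mem_iUnion, Set.mem_setOf_eq, hG]
      constructor
      · intro h
        obtain ⟨n, hn⟩ := ENNReal.exists_nat_gt h.ne
        exact ⟨n, hn.trans_le le_self_add⟩
      · rintro ⟨n, hn⟩
        exact hn.trans_le le_top
    rw [hGeq]
    exact isOpen_iUnion fun n =>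
      X.ball_isOpen L hL μ₀ (lt_of_lt_of_le zero_lt_one le_add_self)
  have hGclosed : IsClosed G := by
    rw [← isOpen_compl_iff]
    have hCeq : Gᶜ = ⋃ ν ∈ Gᶜ, {ν' : X.State | X.rho L ν ν' < 1} := by
      ext ν'
      simp only [Set.mem_iUnion, Set.mem_setOf_eq, Set.mem_compl_iff, hG, not_lt, top_le_iff]
      constructor
      · intro h
        exact ⟨ν', h, by rw [X.rho_self_s7]; exact zero_lt_one⟩
      · rintro ⟨ν, hν, hlt⟩
        by_contra h
        have h2 : X.rho L ν' ν < 1 := by rw [X.rho_comm_s7]; exact hlt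
        have h3 : (⊤:ℝ≥0∞) ≤ X.rho L μ₀ ν' + X.rho L ν' ν := hν ▸ X.rho_triangle_s7 L μ₀ ν' ν
        have h4 : X.rho L μ₀ ν' + X.rho L ν' ν ≠ ⊤ :=
          ENNReal.add_ne_top.mpr ⟨h, (h2.trans_le le_top).ne⟩
        exact h4 (top_le_iff.mp h3)
    rw [hCeq]
    exact isOpen_biUnion fun ν _ => X.ball_isOpen L hL ν zero_lt_one
  have hGuniv : G = Set.univ :=
    IsClopen.eq_univ ⟨hGclosed, hGopen⟩ ⟨μ₀, by simp [hG, X.rho_self_s7]⟩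
  have hall : ∀ ν : X.State, X.rho L μ₀ ν < ⊤ := by
    intro ν
    have : ν ∈ G := hGuniv ▸ Set.mem_univ ν
    exact this
  obtain ⟨t, ht⟩ := isCompact_univ.elim_finite_subcover
    (fun ν : X.State => {ν' : X.State | X.rho L ν ν' < 1})
    (fun ν => X.ball_isOpen L hL ν zero_lt_one)
    (fun ν' _ => Set.mem_iUnion.mpr ⟨ν', by simp [X.rho_self_s7]⟩)
  set C : ℝ≥0∞ := t.sup (fun ν => X.rho L μ₀ ν) with hC
  have hCtop : C < ⊤ := by
    rcases t.eq_empty_or_nonempty with rfl | htne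
    · simp [hC]
    · exact (Finset.sup_lt_iff (by simp : (⊥:ℝ≥0∞) < ⊤)).mpr (fun ν _ => hall ν)
  have hbound : ∀ ν' : X.State, X.rho L μ₀ ν' ≤ C + 1 := by
    intro ν'
    obtain ⟨ν, hνt, hν⟩ := Set.mem_iUnion₂.mp (ht (Set.mem_univ ν'))
    calc X.rho L μ₀ ν' ≤ X.rho L μ₀ ν + X.rho L ν ν' := X.rho_triangle_s7 L μ₀ ν ν'
      _ ≤ C + 1 := add_le_add (Finset.le_sup hνt) hν.le
  have hDne : (2 * (C + 1)) ≠ ⊤ := by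
    apply ENNReal.mul_ne_top (by simp)
    exact ENNReal.add_ne_top.mpr ⟨hCtop.ne, by simp⟩
  refine ⟨(2 * (C + 1)).toReal, ENNReal.toReal_nonneg, fun μ ν a ha => ?_⟩
  have h1 : X.rho L μ ν ≤ 2 * (C + 1) := by
    calc X.rho L μ ν ≤ X.rho L μ μ₀ + X.rho L μ₀ ν := X.rho_triangle_s7 L μ μ₀ ν
      _ = X.rho L μ₀ μ + X.rho L μ₀ ν := by rw [X.rho_comm_s7]
      _ ≤ (C + 1) + (C + 1) := add_le_add (hbound μ) (hbound ν)
      _ = 2 * (C + 1) := by ring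
  have h2 := (X.ofReal_abs_le_rho_s7 L μ ν ha).trans h1
  have h3 := ENNReal.toReal_mono hDne h2
  rwa [ENNReal.toReal_ofReal (abs_nonneg _)] at h3

theorem ballTopology_le_weak (L : Seminorm ℝ X.carrier) (hLip : X.IsLipschitz L) :
    ballTopology (X.rho L) ≤ (inferInstance : TopologicalSpace X.State) := by
  have hcont : @Continuous _ _ (ballTopology (X.rho L)) _
      (fun μ : X.State => (μ.1 : X.carrier → ℝ)) := by
    letI := ballTopology (X.rho L)
    apply continuous_pi
    intro x
    rw [continuous_def]
    intro U hU
    apply generate_isOpen_of_cover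
    intro μ₀ hμ₀
    obtain ⟨ε, hε, hsub⟩ := Metric.isOpen_iff.mp hU _ hμ₀
    refine ⟨{ν : X.State | X.rho L μ₀ ν < ENNReal.ofReal (ε / (L x + 1))},
      ⟨μ₀, ENNReal.ofReal (ε / (L x + 1)), ENNReal.ofReal_pos.mpr (by positivity), rfl⟩,
      ?_, ?_⟩
    · show X.rho L μ₀ μ₀ < _
      rw [X.rho_self_s7]
      exact ENNReal.ofReal_pos.mpr (by positivity)
    · intro ν hν
      apply hsub
      rw [Metric.mem_ball, Real.dist_eq]
      have h1 := X.abs_sub_ofReal_lip L hLip μ₀ ν x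
      have h2 : ENNReal.ofReal (L x) * X.rho L μ₀ ν
          ≤ ENNReal.ofReal (L x) * ENNReal.ofReal (ε / (L x + 1)) :=
        mul_le_mul_right (le_of_lt hν) _
      have h3 : ENNReal.ofReal (L x) * ENNReal.ofReal (ε / (L x + 1))
          = ENNReal.ofReal (L x * (ε / (L x + 1))) :=
        (ENNReal.ofReal_mul (apply_nonneg L x)).symm
      have h4 : |μ₀.1 x - ν.1 x| ≤ L x * (ε / (L x + 1)) := by
        have h5 := (h1.trans h2).trans_eq h3
        exact (ENNReal.ofReal_le_ofReal_iff (by positivity)).mp h5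
      have h6 : L x * (ε / (L x + 1)) < ε := by
        have hL1 : (0:ℝ) < L x + 1 := by positivity
        rw [← mul_div_assoc, div_lt_iff₀ hL1]
        nlinarith [apply_nonneg L x]
      show |ν.1 x - μ₀.1 x| < ε
      rw [abs_sub_comm]
      exact h4.trans_lt h6
  exact continuous_iff_le_induced.mp hcont

section Ne2
variable (he : X.e ≠ 0)
include he

theorem onorm_mem_nonneg {x : X.carrier} {r : ℝ}
    (h : r ∈ {r : ℝ | -(r • X.e) ≤ x ∧ x ≤ r • X.e}) : 0 ≤ r := by
  obtain ⟨h1, h2⟩ := h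
  have h3 : -x ≤ r • X.e := by
    have := X.sub_nonneg_of_le h1
    apply X.le_of_sub_nonneg''
    have heq : r • X.e - -x = x - -(r • X.e) := by abel
    rw [heq]
    exact this
  have h4 : (0:X.carrier) ≤ (r + r) • X.e := by
    have := add_le_add h2 h3
    have heq : x + -x = (0:X.carrier) := by abel
    rw [heq, ← add_smul] at this
    exact this
  have := X.scal_le_of_smul_e_le he (by simpa using h4 : (0:ℝ) • X.e ≤ (r + r) • X.e)
  linarith

omit he in
theorem onorm_set_nonempty (x : X.carrier) :
    {r : ℝ | -(r • X.e) ≤ x ∧ x ≤ r • X.e}.Nonempty := by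
  obtain ⟨r₁, h1⟩ := X.orderUnit x
  obtain ⟨r₂, h2⟩ := X.orderUnit (-x)
  refine ⟨max r₁ r₂, ?_, h1.trans (X.smul_e_mono (le_max_left _ _))⟩
  have h3 : -x ≤ max r₁ r₂ • X.e := h2.trans (X.smul_e_mono (le_max_right _ _))
  have := X.sub_nonneg_of_le h3
  apply X.le_of_sub_nonneg''
  have heq : x - -(max r₁ r₂ • X.e) = max r₁ r₂ • X.e - -x := by abel
  rw [heq]
  exact this

theorem onorm_nonneg (x : X.carrier) : 0 ≤ X.onorm x :=
  le_csInf (X.onorm_set_nonempty x) (fun _ hr => X.onorm_mem_nonneg he hr)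

theorem onorm_le {x : X.carrier} {r : ℝ} (h1 : -(r • X.e) ≤ x) (h2 : x ≤ r • X.e) :
    X.onorm x ≤ r :=
  csInf_le ⟨0, fun _ hr => X.onorm_mem_nonneg he hr⟩ ⟨h1, h2⟩

theorem subnormalized_bound {L : Seminorm ℝ X.carrier} {D : ℝ}
    (hD : ∀ (μ ν : X.State) (a : X.carrier), L a ≤ 1 → |μ.1 a - ν.1 a| ≤ D)
    (f : X.carrier →ₗ[ℝ] ℝ) (hf : ∀ x : X.carrier, 0 ≤ x → 0 ≤ f x)
    (μs : X.State) (a : X.carrier) (ha : L a ≤ 1) :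
    |f a - f X.e * μs.1 a| ≤ f X.e * D := by
  rcases eq_or_lt_of_le (hf X.e X.e_nonneg) with h0 | hpos
  · have hz := X.pos_functional_zero f hf h0.symm
    rw [hz a, ← h0, zero_mul, zero_mul, sub_zero, abs_zero]
  · set s := f X.e with hs
    have hstate : X.IsState (s⁻¹ • f) := by
      constructor
      · show s⁻¹ * f X.e = 1
        rw [← hs, inv_mul_cancel₀ hpos.ne']
      · intro y hy
        show 0 ≤ s⁻¹ * f y
        exact mul_nonneg (inv_nonneg.mpr hpos.le) (hf y hy)
    set φ : X.State := ⟨s⁻¹ • f, hstate⟩ with hφ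
    have key : f a - s * μs.1 a = s * (φ.1 a - μs.1 a) := by
      show f a - s * μs.1 a = s * (s⁻¹ * f a - μs.1 a)
      field_simp
    rw [key, abs_mul, abs_of_pos hpos]
    exact mul_le_mul_of_nonneg_left (hD φ μs a ha) hpos.le

end Ne2

end OrderUnitSpace

section BridgeLemmas

variable {A B : OrderUnitSpace} {LA : Seminorm ℝ A.carrier} {LB : Seminorm ℝ B.carrier}
  {N : Seminorm ℝ (A.prod B).carrier}

theorem IsBridge.eA_ne (hN : IsBridge A B LA LB N) : A.e ≠ 0 := by
  intro h
  apply hN.2.2.1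
  have : ((A.e, (0:B.carrier)) : (A.prod B).carrier) = 0 := by rw [h]; rfl
  rw [this, map_zero]

theorem IsBridge.eB_ne (hN : IsBridge A B LA LB N) : B.e ≠ 0 := by
  intro h
  apply hN.2.2.1
  have : ((A.e, (0:B.carrier)) : (A.prod B).carrier) = (A.e, B.e) := by rw [h]
  rw [this, hN.2.1]

theorem IsBridge.eP_ne (hN : IsBridge A B LA LB N) : (A.prod B).e ≠ 0 := by
  intro h
  apply hN.eA_ne
  exact congrArg Prod.fst h

theorem IsBridge.n₀_pos (hN : IsBridge A B LA LB N) : 0 < N (A.e, 0) :=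
  lt_of_le_of_ne (apply_nonneg N _) (Ne.symm hN.2.2.1)

theorem IsBridge.exists_nonneg_bound (hN : IsBridge A B LA LB N) :
    ∃ c : ℝ, 0 ≤ c ∧ ∀ p : A.carrier × B.carrier, N p ≤ c * (A.prod B).onorm p := by
  obtain ⟨c₀, hc₀⟩ := hN.1
  refine ⟨max c₀ 0, le_max_right _ _, fun p => (hc₀ p).trans ?_⟩
  exact mul_le_mul_of_nonneg_right (le_max_left _ _) ((A.prod B).onorm_nonneg hN.eP_ne p)

theorem lip_e_zero (hLA : A.IsLipNorm LA) : LA A.e = 0 :=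
  (hLA.1 A.e).mpr ⟨1, (one_smul ℝ A.e).symm⟩

/-- Cross-term bound: a uniform bound on `|φ(a) - ψ(b)|` over the unit ball of `L`. -/
theorem cross_bound (hLA : A.IsLipNorm LA) (hLB : B.IsLipNorm LB)
    (hN : IsBridge A B LA LB N) :
    ∃ K : ℝ, 0 ≤ K ∧ ∀ (φ : A.State) (ψ : B.State) (a : A.carrier) (b : B.carrier),
      LA a ≤ 1 → LB b ≤ 1 → N (a, b) ≤ 1 → |φ.1 a - ψ.1 b| ≤ K := by
  have h_eA := hN.eA_ne
  have h_eB := hN.eB_ne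
  have h_eP := hN.eP_ne
  obtain ⟨DA, hDA0, hDA⟩ := A.exists_diam_bound LA hLA
  obtain ⟨DB, hDB0, hDB⟩ := B.exists_diam_bound LB hLB
  obtain ⟨c, hc0, hc⟩ := hN.exists_nonneg_bound
  set D : ℝ := max DA DB with hD
  have hD0 : 0 ≤ D := le_trans hDA0 (le_max_left _ _)
  have hn₀ := hN.n₀_pos
  refine ⟨(1 + c * D) / N (A.e, 0), by positivity, ?_⟩
  intro φ ψ a b ha hb hab
  set α := φ.1 a with hα
  set β := ψ.1 b with hβ
  set a' : A.carrier := a - α • A.e with ha'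
  set b' : B.carrier := b - β • B.e with hb'
  have haA : ∀ χ : A.State, |χ.1 a'| ≤ DA := by
    intro χ
    have h1 : χ.1 a' = χ.1 a - α := by
      rw [ha', map_sub, map_smul, smul_eq_mul, χ.2.1, mul_one]
    rw [h1]
    exact hDA χ φ a ha
  have hbB : ∀ χ : B.State, |χ.1 b'| ≤ DB := by
    intro χ
    have h1 : χ.1 b' = χ.1 b - β := by
      rw [hb', map_sub, map_smul, smul_eq_mul, χ.2.1, mul_one]
    rw [h1]
    exact hDB χ ψ b hb
  have hsandA := A.abs_state_bounds h_eA (fun μ => haA μ)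
  have hsandB := B.abs_state_bounds h_eB (fun μ => hbB μ)
  have hup : ((a', b') : (A.prod B).carrier) ≤ D • (A.prod B).e := by
    rw [Prod.le_def]
    constructor
    · exact hsandA.2.trans (A.smul_e_mono (le_max_left _ _))
    · exact hsandB.2.trans (B.smul_e_mono (le_max_right _ _))
  have hlow : -(D • (A.prod B).e) ≤ ((a', b') : (A.prod B).carrier) := by
    rw [Prod.le_def]
    constructor
    · refine le_trans ?_ hsandA.1
      show -(D • (A.prod B).e).1 ≤ -(DA • A.e)
      rw [Prod.smul_fst]
      have := A.smul_e_mono (le_max_left DA DB)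
      apply A.le_of_sub_nonneg''
      have h2 := A.sub_nonneg_of_le this
      have heq : -(DA • A.e) - -(D • A.e) = D • A.e - DA • A.e := by abel
      rw [heq]
      exact h2
    · refine le_trans ?_ hsandB.1
      show -(D • (A.prod B).e).2 ≤ -(DB • B.e)
      rw [Prod.smul_snd]
      have := B.smul_e_mono (le_max_right DA DB)
      apply B.le_of_sub_nonneg''
      have h2 := B.sub_nonneg_of_le this
      have heq : -(DB • B.e) - -(D • B.e) = D • B.e - DB • B.e := by abel
      rw [heq]
      exact h2
  have honorm : (A.prod B).onorm (a', b') ≤ D := (A.prod B).onorm_le h_eP hlow hup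
  have hN' : N (a', b') ≤ c * D := (hc _).trans (mul_le_mul_of_nonneg_left honorm hc0)
  have hsplit : N ((α • A.e, β • B.e) : (A.prod B).carrier) ≤ 1 + c * D := by
    have heq : ((α • A.e, β • B.e) : (A.prod B).carrier) = (a, b) - (a', b') := by
      rw [ha', hb']
      ext
      · show α • A.e = a - (a - α • A.e); abel
      · show β • B.e = b - (b - β • B.e); abel
    rw [heq]
    exact (map_sub_le_add N _ _).trans (add_le_add hab hN')
  have hkey : |α - β| * N (A.e, 0) ≤ 1 + c * D := by
    have h1 : ((α - β) • ((A.e, (0:B.carrier)) : (A.prod B).carrier))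
        = ((α • A.e, β • B.e) : (A.prod B).carrier) - β • ((A.prod B).e) := by
      ext
      · show (α - β) • A.e = α • A.e - β • A.e
        rw [sub_smul]
      · show (α - β) • (0:B.carrier) = β • B.e - β • B.e
        simp
    have h2 := (h1 ▸ map_sub_le_add N ((α • A.e, β • B.e) : (A.prod B).carrier)
      (β • ((A.prod B).e)) : N ((α - β) • ((A.e, (0:B.carrier)) : (A.prod B).carrier)) ≤ _)
    rw [map_smul_eq_mul, map_smul_eq_mul] at h2
    have h3 : N ((A.prod B).e) = 0 := hN.2.1
    rw [h3, mul_zero, add_zero, Real.norm_eq_abs] at h2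
    exact h2.trans hsplit
  rw [hα, hβ] at hkey ⊢
  rw [le_div_iff₀ hn₀]
  exact hkey

end BridgeLemmas

section ControlLemmas

variable {A B : OrderUnitSpace} {LA : Seminorm ℝ A.carrier} {LB : Seminorm ℝ B.carrier}
  {N : Seminorm ℝ (A.prod B).carrier}

theorem left_control (hLA : A.IsLipNorm LA) (hN : IsBridge A B LA LB N)
    {DA : ℝ} (hDA0 : 0 ≤ DA)
    (hDA : ∀ (μ ν : A.State) (a : A.carrier), LA a ≤ 1 → |μ.1 a - ν.1 a| ≤ DA)
    (μs : A.State) (p₀ : (A.prod B).State) {η : ℝ} (hη : 0 < η) :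
    ∃ (V : Set (A.prod B).State) (φ₀ : A.State), IsOpen V ∧ p₀ ∈ V ∧
      (∀ a : A.carrier, p₀.1 (a, 0) = p₀.1 (A.e, 0) * φ₀.1 a) ∧
      (∀ p ∈ V, ∀ a : A.carrier, LA a ≤ 1 → |p.1 (a, 0) - p.1 (A.e, 0) * φ₀.1 a| ≤ η) := by
  have h_eA := hN.eA_ne
  set inlA := LinearMap.inl ℝ A.carrier B.carrier with hinl
  have hpos : ∀ (p : (A.prod B).State) (x : A.carrier), 0 ≤ x → 0 ≤ (p.1.comp inlA) x := by
    intro p x hx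
    exact p.2.2 (x, 0) (Prod.le_def.mpr ⟨hx, le_rfl⟩)
  have happ : ∀ (p : (A.prod B).State) (x : A.carrier), (p.1.comp inlA) x = p.1 (x, 0) :=
    fun p x => rfl
  have hsle : ∀ p : (A.prod B).State, p.1 (A.e, 0) ≤ 1 := by
    intro p
    have h1 : p.1 ((A.e, B.e) : (A.prod B).carrier) = 1 := p.2.1
    have h2 : ((A.e, B.e) : (A.prod B).carrier) = (A.e, 0) + (0, B.e) := by
      ext <;> simp
    have h3 : 0 ≤ p.1 (0, B.e) := p.2.2 _ (Prod.le_def.mpr ⟨le_rfl, B.e_nonneg⟩)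
    rw [h2, map_add] at h1
    linarith
  have hs0 : ∀ p : (A.prod B).State, 0 ≤ p.1 (A.e, 0) :=
    fun p => p.2.2 _ (Prod.le_def.mpr ⟨A.e_nonneg, le_rfl⟩)
  rcases eq_or_lt_of_le (hs0 p₀) with hz | hpos₀
  · refine ⟨{p : (A.prod B).State | p.1 (A.e, 0) < η / (DA + 1)}, μs, ?_, ?_, ?_, ?_⟩
    · have hseq : {p : (A.prod B).State | p.1 (A.e, 0) < η / (DA + 1)}
          = (fun p : (A.prod B).State => p.1 ((A.e, 0) : (A.prod B).carrier)) ⁻¹'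
            (Set.Iio (η / (DA + 1))) := rfl
      rw [hseq]
      exact isOpen_Iio.preimage ((A.prod B).continuous_eval (A.e, 0))
    · show p₀.1 (A.e, 0) < η / (DA + 1)
      rw [← hz]
      exact div_pos hη (by linarith)
    · intro a
      rw [← hz, zero_mul]
      have h4 := A.pos_functional_zero (p₀.1.comp inlA) (hpos p₀)
        (by rw [happ]; exact hz.symm) a
      rw [happ] at h4
      exact h4
    · intro p hp a ha
      have hb := A.subnormalized_bound h_eA hDA (p.1.comp inlA) (hpos p) μs a ha
      rw [happ, happ] at hb
      refine hb.trans ?_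
      have h1 : p.1 (A.e, 0) * DA ≤ (η / (DA + 1)) * DA :=
        mul_le_mul_of_nonneg_right (le_of_lt hp) hDA0
      refine h1.trans ?_
      rw [div_mul_eq_mul_div, div_le_iff₀ (by positivity : (0:ℝ) < DA + 1)]
      nlinarith
  · set s₀ := p₀.1 (A.e, 0) with hs₀def
    have hstate : ∀ (p : (A.prod B).State), 0 < p.1 (A.e, 0) →
        A.IsState ((p.1 (A.e, 0))⁻¹ • (p.1.comp inlA)) := by
      intro p hp
      constructor
      · show (p.1 (A.e, 0))⁻¹ * (p.1.comp inlA) A.e = 1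
        rw [happ, inv_mul_cancel₀ hp.ne']
      · intro x hx
        show 0 ≤ (p.1 (A.e, 0))⁻¹ * (p.1.comp inlA) x
        exact mul_nonneg (inv_nonneg.mpr hp.le) (hpos p x hx)
    set φ₀ : A.State := ⟨s₀⁻¹ • (p₀.1.comp inlA), hstate p₀ hpos₀⟩ with hφ₀
    have hid : ∀ a : A.carrier, p₀.1 (a, 0) = s₀ * φ₀.1 a := by
      intro a
      show p₀.1 (a, 0) = s₀ * (s₀⁻¹ * (p₀.1.comp inlA) a)
      rw [happ, ← mul_assoc, mul_inv_cancel₀ hpos₀.ne', one_mul]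
    have hW : IsOpen {φ : A.State | A.rho LA φ₀ φ < ENNReal.ofReal η} :=
      A.ball_isOpen LA hLA φ₀ (ENNReal.ofReal_pos.mpr hη)
    obtain ⟨O, hO, hOW⟩ := isOpen_induced_iff.mp hW
    set θ := s₀ / 2 with hθ
    have hθ0 : 0 < θ := half_pos hpos₀
    set G : (A.prod B).State → (A.carrier → ℝ) := fun p a => p.1 (a, 0) / p.1 (A.e, 0) with hG
    have hU1 : IsOpen {p : (A.prod B).State | θ < p.1 (A.e, 0)} := by
      have hseq : {p : (A.prod B).State | θ < p.1 (A.e, 0)}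
          = (fun p : (A.prod B).State => p.1 ((A.e, 0) : (A.prod B).carrier)) ⁻¹'
            (Set.Ioi θ) := rfl
      rw [hseq]
      exact isOpen_Ioi.preimage ((A.prod B).continuous_eval (A.e, 0))
    have hGcont : ContinuousOn G {p : (A.prod B).State | θ < p.1 (A.e, 0)} := by
      rw [continuousOn_pi]
      intro a
      apply ContinuousOn.div
      · exact ((A.prod B).continuous_eval ((a, 0) : (A.prod B).carrier)).continuousOn
      · exact ((A.prod B).continuous_eval ((A.e, 0) : (A.prod B).carrier)).continuousOn
      · intro p hp
        exact (lt_trans hθ0 hp).ne'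
    refine ⟨{p : (A.prod B).State | θ < p.1 (A.e, 0)} ∩ G ⁻¹' O, φ₀,
      hGcont.isOpen_inter_preimage hU1 hO, ⟨?_, ?_⟩, hid, ?_⟩
    · show θ < s₀
      rw [hθ]
      linarith
    · show G p₀ ∈ O
      have hGp₀ : G p₀ = (φ₀.1 : A.carrier → ℝ) := by
        funext a
        show p₀.1 (a, 0) / s₀ = s₀⁻¹ * (p₀.1.comp inlA) a
        rw [happ, div_eq_inv_mul]
      rw [hGp₀]
      have hmem : φ₀ ∈ {φ : A.State | A.rho LA φ₀ φ < ENNReal.ofReal η} := by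
        show A.rho LA φ₀ φ₀ < ENNReal.ofReal η
        rw [A.rho_self_s7]
        exact ENNReal.ofReal_pos.mpr hη
      rw [← hOW] at hmem
      exact hmem
    · rintro p ⟨hp1, hp2⟩ a ha
      have hps : (0:ℝ) < p.1 (A.e, 0) := lt_trans hθ0 hp1
      set φ : A.State := ⟨(p.1 (A.e, 0))⁻¹ • (p.1.comp inlA), hstate p hps⟩ with hφ
      have hGp : G p = (φ.1 : A.carrier → ℝ) := by
        funext x
        show p.1 (x, 0) / p.1 (A.e, 0) = (p.1 (A.e, 0))⁻¹ * (p.1.comp inlA) x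
        rw [happ, div_eq_inv_mul]
      have hφW : A.rho LA φ₀ φ < ENNReal.ofReal η := by
        have hmem : (φ.1 : A.carrier → ℝ) ∈ O := by rw [← hGp]; exact hp2
        have h2 : φ ∈ (fun μ : A.State => (μ.1 : A.carrier → ℝ)) ⁻¹' O := hmem
        rw [hOW] at h2
        exact h2
      have habs : |φ₀.1 a - φ.1 a| < η := by
        have h1 := (A.ofReal_abs_le_rho_s7 LA φ₀ φ ha).trans_lt hφW
        exact (ENNReal.ofReal_lt_ofReal_iff hη).mp h1
      have hpa : p.1 (a, 0) = p.1 (A.e, 0) * φ.1 a := by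
        show p.1 (a, 0) = p.1 (A.e, 0) * ((p.1 (A.e, 0))⁻¹ * (p.1.comp inlA) a)
        rw [happ, ← mul_assoc, mul_inv_cancel₀ hps.ne', one_mul]
      rw [hpa, ← mul_sub, abs_mul, abs_of_pos hps]
      calc p.1 (A.e, 0) * |φ.1 a - φ₀.1 a| ≤ 1 * |φ.1 a - φ₀.1 a| :=
            mul_le_mul_of_nonneg_right (hsle p) (abs_nonneg _)
        _ = |φ₀.1 a - φ.1 a| := by rw [one_mul, abs_sub_comm]
        _ ≤ η := habs.le

theorem right_control (hLB : B.IsLipNorm LB) (hN : IsBridge A B LA LB N)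
    {DB : ℝ} (hDB0 : 0 ≤ DB)
    (hDB : ∀ (μ ν : B.State) (b : B.carrier), LB b ≤ 1 → |μ.1 b - ν.1 b| ≤ DB)
    (νs : B.State) (p₀ : (A.prod B).State) {η : ℝ} (hη : 0 < η) :
    ∃ (V : Set (A.prod B).State) (ψ₀ : B.State), IsOpen V ∧ p₀ ∈ V ∧
      (∀ b : B.carrier, p₀.1 (0, b) = p₀.1 (0, B.e) * ψ₀.1 b) ∧
      (∀ p ∈ V, ∀ b : B.carrier, LB b ≤ 1 → |p.1 (0, b) - p.1 (0, B.e) * ψ₀.1 b| ≤ η) := by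
  have h_eB := hN.eB_ne
  set inrB := LinearMap.inr ℝ A.carrier B.carrier with hinr
  have hpos : ∀ (p : (A.prod B).State) (x : B.carrier), 0 ≤ x → 0 ≤ (p.1.comp inrB) x := by
    intro p x hx
    exact p.2.2 (0, x) (Prod.le_def.mpr ⟨le_rfl, hx⟩)
  have happ : ∀ (p : (A.prod B).State) (x : B.carrier), (p.1.comp inrB) x = p.1 (0, x) :=
    fun p x => rfl
  have hsle : ∀ p : (A.prod B).State, p.1 (0, B.e) ≤ 1 := by
    intro p
    have h1 : p.1 ((A.e, B.e) : (A.prod B).carrier) = 1 := p.2.1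
    have h2 : ((A.e, B.e) : (A.prod B).carrier) = (A.e, 0) + (0, B.e) := by
      ext <;> simp
    have h3 : 0 ≤ p.1 (A.e, 0) := p.2.2 _ (Prod.le_def.mpr ⟨A.e_nonneg, le_rfl⟩)
    rw [h2, map_add] at h1
    linarith
  have hs0 : ∀ p : (A.prod B).State, 0 ≤ p.1 (0, B.e) :=
    fun p => p.2.2 _ (Prod.le_def.mpr ⟨le_rfl, B.e_nonneg⟩)
  rcases eq_or_lt_of_le (hs0 p₀) with hz | hpos₀
  · refine ⟨{p : (A.prod B).State | p.1 (0, B.e) < η / (DB + 1)}, νs, ?_, ?_, ?_, ?_⟩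
    · have hseq : {p : (A.prod B).State | p.1 (0, B.e) < η / (DB + 1)}
          = (fun p : (A.prod B).State => p.1 ((0, B.e) : (A.prod B).carrier)) ⁻¹'
            (Set.Iio (η / (DB + 1))) := rfl
      rw [hseq]
      exact isOpen_Iio.preimage ((A.prod B).continuous_eval (0, B.e))
    · show p₀.1 (0, B.e) < η / (DB + 1)
      rw [← hz]
      exact div_pos hη (by linarith)
    · intro b
      rw [← hz, zero_mul]
      have h4 := B.pos_functional_zero (p₀.1.comp inrB) (hpos p₀)
        (by rw [happ]; exact hz.symm) b
      rw [happ] at h4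
      exact h4
    · intro p hp b hb
      have hbd := B.subnormalized_bound h_eB hDB (p.1.comp inrB) (hpos p) νs b hb
      rw [happ, happ] at hbd
      refine hbd.trans ?_
      have h1 : p.1 (0, B.e) * DB ≤ (η / (DB + 1)) * DB :=
        mul_le_mul_of_nonneg_right (le_of_lt hp) hDB0
      refine h1.trans ?_
      rw [div_mul_eq_mul_div, div_le_iff₀ (by positivity : (0:ℝ) < DB + 1)]
      nlinarith
  · set s₀ := p₀.1 (0, B.e) with hs₀def
    have hstate : ∀ (p : (A.prod B).State), 0 < p.1 (0, B.e) →
        B.IsState ((p.1 (0, B.e))⁻¹ • (p.1.comp inrB)) := by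
      intro p hp
      constructor
      · show (p.1 (0, B.e))⁻¹ * (p.1.comp inrB) B.e = 1
        rw [happ, inv_mul_cancel₀ hp.ne']
      · intro x hx
        show 0 ≤ (p.1 (0, B.e))⁻¹ * (p.1.comp inrB) x
        exact mul_nonneg (inv_nonneg.mpr hp.le) (hpos p x hx)
    set ψ₀ : B.State := ⟨s₀⁻¹ • (p₀.1.comp inrB), hstate p₀ hpos₀⟩ with hψ₀
    have hid : ∀ b : B.carrier, p₀.1 (0, b) = s₀ * ψ₀.1 b := by
      intro b
      show p₀.1 (0, b) = s₀ * (s₀⁻¹ * (p₀.1.comp inrB) b)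
      rw [happ, ← mul_assoc, mul_inv_cancel₀ hpos₀.ne', one_mul]
    have hW : IsOpen {ψ : B.State | B.rho LB ψ₀ ψ < ENNReal.ofReal η} :=
      B.ball_isOpen LB hLB ψ₀ (ENNReal.ofReal_pos.mpr hη)
    obtain ⟨O, hO, hOW⟩ := isOpen_induced_iff.mp hW
    set θ := s₀ / 2 with hθ
    have hθ0 : 0 < θ := half_pos hpos₀
    set G : (A.prod B).State → (B.carrier → ℝ) := fun p b => p.1 (0, b) / p.1 (0, B.e) with hG
    have hU1 : IsOpen {p : (A.prod B).State | θ < p.1 (0, B.e)} := by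
      have hseq : {p : (A.prod B).State | θ < p.1 (0, B.e)}
          = (fun p : (A.prod B).State => p.1 ((0, B.e) : (A.prod B).carrier)) ⁻¹'
            (Set.Ioi θ) := rfl
      rw [hseq]
      exact isOpen_Ioi.preimage ((A.prod B).continuous_eval (0, B.e))
    have hGcont : ContinuousOn G {p : (A.prod B).State | θ < p.1 (0, B.e)} := by
      rw [continuousOn_pi]
      intro b
      apply ContinuousOn.div
      · exact ((A.prod B).continuous_eval ((0, b) : (A.prod B).carrier)).continuousOn
      · exact ((A.prod B).continuous_eval ((0, B.e) : (A.prod B).carrier)).continuousOn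
      · intro p hp
        exact (lt_trans hθ0 hp).ne'
    refine ⟨{p : (A.prod B).State | θ < p.1 (0, B.e)} ∩ G ⁻¹' O, ψ₀,
      hGcont.isOpen_inter_preimage hU1 hO, ⟨?_, ?_⟩, hid, ?_⟩
    · show θ < s₀
      rw [hθ]
      linarith
    · show G p₀ ∈ O
      have hGp₀ : G p₀ = (ψ₀.1 : B.carrier → ℝ) := by
        funext b
        show p₀.1 (0, b) / s₀ = s₀⁻¹ * (p₀.1.comp inrB) b
        rw [happ, div_eq_inv_mul]
      rw [hGp₀]
      have hmem : ψ₀ ∈ {ψ : B.State | B.rho LB ψ₀ ψ < ENNReal.ofReal η} := by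
        show B.rho LB ψ₀ ψ₀ < ENNReal.ofReal η
        rw [B.rho_self_s7]
        exact ENNReal.ofReal_pos.mpr hη
      rw [← hOW] at hmem
      exact hmem
    · rintro p ⟨hp1, hp2⟩ b hb
      have hps : (0:ℝ) < p.1 (0, B.e) := lt_trans hθ0 hp1
      set ψ : B.State := ⟨(p.1 (0, B.e))⁻¹ • (p.1.comp inrB), hstate p hps⟩ with hψ
      have hGp : G p = (ψ.1 : B.carrier → ℝ) := by
        funext x
        show p.1 (0, x) / p.1 (0, B.e) = (p.1 (0, B.e))⁻¹ * (p.1.comp inrB) x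
        rw [happ, div_eq_inv_mul]
      have hψW : B.rho LB ψ₀ ψ < ENNReal.ofReal η := by
        have hmem : (ψ.1 : B.carrier → ℝ) ∈ O := by rw [← hGp]; exact hp2
        have h2 : ψ ∈ (fun μ : B.State => (μ.1 : B.carrier → ℝ)) ⁻¹' O := hmem
        rw [hOW] at h2
        exact h2
      have habs : |ψ₀.1 b - ψ.1 b| < η := by
        have h1 := (B.ofReal_abs_le_rho_s7 LB ψ₀ ψ hb).trans_lt hψW
        exact (ENNReal.ofReal_lt_ofReal_iff hη).mp h1
      have hpb : p.1 (0, b) = p.1 (0, B.e) * ψ.1 b := by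
        show p.1 (0, b) = p.1 (0, B.e) * ((p.1 (0, B.e))⁻¹ * (p.1.comp inrB) b)
        rw [happ, ← mul_assoc, mul_inv_cancel₀ hps.ne', one_mul]
      rw [hpb, ← mul_sub, abs_mul, abs_of_pos hps]
      calc p.1 (0, B.e) * |ψ.1 b - ψ₀.1 b| ≤ 1 * |ψ.1 b - ψ₀.1 b| :=
            mul_le_mul_of_nonneg_right (hsle p) (abs_nonneg _)
        _ = |ψ₀.1 b - ψ.1 b| := by rw [one_mul, abs_sub_comm]
        _ ≤ η := habs.le

end ControlLemmas

section MainControl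

variable {A B : OrderUnitSpace} {LA : Seminorm ℝ A.carrier} {LB : Seminorm ℝ B.carrier}
  {N : Seminorm ℝ (A.prod B).carrier}

theorem sup_seminorm_apply (LA : Seminorm ℝ A.carrier) (LB : Seminorm ℝ B.carrier)
    (N : Seminorm ℝ (A.prod B).carrier) (p : (A.prod B).carrier) :
    (LA.comp (LinearMap.fst ℝ A.carrier B.carrier) ⊔
      LB.comp (LinearMap.snd ℝ A.carrier B.carrier) ⊔ N) p
      = max (max (LA p.1) (LB p.2)) (N p) := by
  rw [Seminorm.sup_apply, Seminorm.sup_apply, Seminorm.comp_apply, Seminorm.comp_apply]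
  rfl

theorem main_control (hLA : A.IsLipNorm LA) (hLB : B.IsLipNorm LB)
    (hN : IsBridge A B LA LB N) (p₀ : (A.prod B).State) {η : ℝ} (hη : 0 < η) :
    ∃ V : Set (A.prod B).State, IsOpen V ∧ p₀ ∈ V ∧
      ∀ p ∈ V, (A.prod B).rho (LA.comp (LinearMap.fst ℝ A.carrier B.carrier) ⊔
        LB.comp (LinearMap.snd ℝ A.carrier B.carrier) ⊔ N) p₀ p ≤ ENNReal.ofReal η := by
  obtain ⟨DA, hDA0, hDA⟩ := A.exists_diam_bound LA hLA
  obtain ⟨DB, hDB0, hDB⟩ := B.exists_diam_bound LB hLB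
  obtain ⟨K, hK0, hK⟩ := cross_bound hLA hLB hN
  obtain ⟨μs⟩ := A.state_nonempty hN.eA_ne
  obtain ⟨νs⟩ := B.state_nonempty hN.eB_ne
  have hη3 : 0 < η / 3 := by linarith
  obtain ⟨V₁, φ₀, hV₁o, hV₁m, hid₁, hb₁⟩ := left_control hLA hN hDA0 hDA μs p₀ hη3
  obtain ⟨V₂, ψ₀, hV₂o, hV₂m, hid₂, hb₂⟩ := right_control hLB hN hDB0 hDB νs p₀ hη3
  set r := η / (3 * (K + 1)) with hr
  have hr0 : 0 < r := by rw [hr]; positivity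
  set V₃ : Set (A.prod B).State := {p | |p.1 (A.e, 0) - p₀.1 (A.e, 0)| < r} with hV₃
  have hV₃o : IsOpen V₃ := by
    have hseq : V₃ = (fun p : (A.prod B).State => p.1 ((A.e, 0) : (A.prod B).carrier)) ⁻¹'
        (Metric.ball (p₀.1 (A.e, 0)) r) := by
      ext p
      simp [hV₃, Metric.mem_ball, Real.dist_eq]
    rw [hseq]
    exact Metric.isOpen_ball.preimage ((A.prod B).continuous_eval (A.e, 0))
  have hV₃m : p₀ ∈ V₃ := by
    show |p₀.1 (A.e, 0) - p₀.1 (A.e, 0)| < r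
    simpa using hr0
  refine ⟨V₁ ∩ V₂ ∩ V₃, (hV₁o.inter hV₂o).inter hV₃o, ⟨⟨hV₁m, hV₂m⟩, hV₃m⟩, ?_⟩
  rintro p ⟨⟨hp₁, hp₂⟩, hp₃⟩
  apply iSup_le
  rintro ⟨⟨a, b⟩, hx⟩
  rw [sup_seminorm_apply] at hx
  simp only [max_le_iff] at hx
  obtain ⟨⟨hxa, hxb⟩, hxn⟩ := hx
  have e1 : p.1 ((a, b) : (A.prod B).carrier) = p.1 (a, 0) + p.1 (0, b) := by
    rw [← map_add]
    congr 1
    ext <;> simp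
  have e2 : p₀.1 ((a, b) : (A.prod B).carrier) = p₀.1 (a, 0) + p₀.1 (0, b) := by
    rw [← map_add]
    congr 1
    ext <;> simp
  have e3 := hid₁ a
  have e4 := hid₂ b
  have esum : ∀ q : (A.prod B).State, q.1 (0, B.e) = 1 - q.1 (A.e, 0) := by
    intro q
    have h1 : q.1 ((A.e, B.e) : (A.prod B).carrier) = 1 := q.2.1
    have h2 : ((A.e, B.e) : (A.prod B).carrier) = (A.e, 0) + (0, B.e) := by ext <;> simp
    rw [h2, map_add] at h1
    linarith
  have e5 := esum p
  have e6 := esum p₀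
  have keyeq : p₀.1 ((a, b) : (A.prod B).carrier) - p.1 ((a, b) : (A.prod B).carrier)
      = -((p.1 (a, 0) - p.1 (A.e, 0) * φ₀.1 a) + (p.1 (0, b) - p.1 (0, B.e) * ψ₀.1 b)
        + (p.1 (A.e, 0) - p₀.1 (A.e, 0)) * (φ₀.1 a - ψ₀.1 b)) := by
    rw [e1, e2, e3, e4, e5, e6]
    ring
  have hT1 := hb₁ p hp₁ a hxa
  have hT2 := hb₂ p hp₂ b hxb
  have hT3 : |(p.1 (A.e, 0) - p₀.1 (A.e, 0)) * (φ₀.1 a - ψ₀.1 b)| ≤ η / 3 := by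
    rw [abs_mul]
    have hcross := hK φ₀ ψ₀ a b hxa hxb hxn
    have hmul : |p.1 (A.e, 0) - p₀.1 (A.e, 0)| * |φ₀.1 a - ψ₀.1 b| ≤ r * K :=
      mul_le_mul (le_of_lt hp₃) hcross (abs_nonneg _) hr0.le
    refine hmul.trans ?_
    rw [hr, div_mul_eq_mul_div, div_le_div_iff₀ (by positivity : (0:ℝ) < 3 * (K + 1))
      (by norm_num : (0:ℝ) < 3)]
    nlinarith
  have htot : |p₀.1 ((a, b) : (A.prod B).carrier) - p.1 ((a, b) : (A.prod B).carrier)| ≤ η := by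
    rw [keyeq, abs_neg]
    have habs : |(p.1 (a, 0) - p.1 (A.e, 0) * φ₀.1 a) + (p.1 (0, b) - p.1 (0, B.e) * ψ₀.1 b)
        + (p.1 (A.e, 0) - p₀.1 (A.e, 0)) * (φ₀.1 a - ψ₀.1 b)|
        ≤ |p.1 (a, 0) - p.1 (A.e, 0) * φ₀.1 a| + |p.1 (0, b) - p.1 (0, B.e) * ψ₀.1 b|
          + |(p.1 (A.e, 0) - p₀.1 (A.e, 0)) * (φ₀.1 a - ψ₀.1 b)| :=
      (abs_add_le _ _).trans (add_le_add_left (abs_add_le _ _) _)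
    refine habs.trans ?_
    linarith
  exact ENNReal.ofReal_le_ofReal htot

end MainControl



/-- **Theorem 5.2 of Rieffel.** If `N` is a bridge between the compact quantum metric
spaces `(A, L_A)` and `(B, L_B)`, then `L(a,b) = max (L_A a) (max (L_B b) (N (a,b)))`
is a Lip-norm on `A ⊕ B` which induces `L_A` and `L_B`, i.e. `L ∈ M(L_A, L_B)`. -/
theorem bridge_yields_admissible_lipnorm (A B : OrderUnitSpace)
    (LA : Seminorm ℝ A.carrier) (LB : Seminorm ℝ B.carrier)
    (hLA : A.IsLipNorm LA) (hLB : B.IsLipNorm LB)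
    (N : Seminorm ℝ (A.prod B).carrier) (hN : IsBridge A B LA LB N) :
    (LA.comp (LinearMap.fst ℝ A.carrier B.carrier) ⊔
      LB.comp (LinearMap.snd ℝ A.carrier B.carrier) ⊔ N) ∈ A.admissible B LA LB := by
  set L : Seminorm ℝ (A.prod B).carrier := LA.comp (LinearMap.fst ℝ A.carrier B.carrier) ⊔
      LB.comp (LinearMap.snd ℝ A.carrier B.carrier) ⊔ N with hLdef
  have hLapp : ∀ p : (A.prod B).carrier, L p = max (max (LA p.1) (LB p.2)) (N p) :=
    fun p => sup_seminorm_apply LA LB N p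
  have hn₀ := hN.n₀_pos
  -- the Lipschitz property
  have hLip : (A.prod B).IsLipschitz L := by
    intro x
    constructor
    · intro h0
      rw [hLapp] at h0
      have hxa : LA x.1 = 0 := le_antisymm
        (h0 ▸ (le_max_left _ _).trans (le_max_left _ _)) (apply_nonneg _ _)
      have hxb : LB x.2 = 0 := le_antisymm
        (h0 ▸ (le_max_right _ _).trans (le_max_left _ _)) (apply_nonneg _ _)
      have hxn : N x = 0 := le_antisymm (h0 ▸ le_max_right _ _) (apply_nonneg _ _)
      obtain ⟨sa, hsa⟩ := (hLA.1 x.1).mp hxa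
      obtain ⟨sb, hsb⟩ := (hLB.1 x.2).mp hxb
      have hxeq : x = ((sa • A.e, sb • B.e) : (A.prod B).carrier) := by
        ext
        · exact hsa
        · exact hsb
      have h4 : ((sa - sb) • ((A.e, (0:B.carrier)) : (A.prod B).carrier))
          = ((sa • A.e, sb • B.e) : (A.prod B).carrier) - sb • ((A.prod B).e) := by
        ext
        · show (sa - sb) • A.e = sa • A.e - sb • A.e
          rw [sub_smul]
        · show (sa - sb) • (0:B.carrier) = sb • B.e - sb • B.e
          simp
      have h5 := (h4 ▸ map_sub_le_add N ((sa • A.e, sb • B.e) : (A.prod B).carrier)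
        (sb • ((A.prod B).e)) :
        N ((sa - sb) • ((A.e, (0:B.carrier)) : (A.prod B).carrier)) ≤ _)
      rw [map_smul_eq_mul, map_smul_eq_mul, hN.2.1, mul_zero, add_zero,
        ← hxeq, hxn, Real.norm_eq_abs] at h5
      have hsab : sa = sb := by
        by_contra hne
        have h6 : 0 < |sa - sb| := abs_pos.mpr (sub_ne_zero.mpr hne)
        nlinarith
      refine ⟨sa, ?_⟩
      rw [hxeq, hsab]
      ext
      · show sb • A.e = (sb • (A.prod B).e).1
        rw [Prod.smul_fst]
      · show sb • B.e = (sb • (A.prod B).e).2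
        rw [Prod.smul_snd]
    · rintro ⟨t, rfl⟩
      rw [hLapp]
      have h1 : LA (t • (A.prod B).e).1 = 0 := by
        rw [Prod.smul_fst]
        show LA (t • A.e) = 0
        rw [map_smul_eq_mul, lip_e_zero hLA, mul_zero]
      have h2 : LB (t • (A.prod B).e).2 = 0 := by
        rw [Prod.smul_snd]
        show LB (t • B.e) = 0
        rw [map_smul_eq_mul, lip_e_zero hLB, mul_zero]
      have h3 : N (t • (A.prod B).e) = 0 := by
        rw [map_smul_eq_mul, hN.2.1, mul_zero]
      rw [h1, h2, h3]
      simp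
  refine ⟨⟨hLip, ?_⟩, ?_, ?_⟩
  · -- the topologies agree
    apply le_antisymm
    · exact (A.prod B).ballTopology_le_weak L hLip
    · apply le_generateFrom
      rintro U ⟨μ₀, ε, hε, rfl⟩
      rw [isOpen_iff_forall_mem_open]
      intro p₀ hp₀
      have hp₀' : (A.prod B).rho L μ₀ p₀ < ε := hp₀
      obtain ⟨ρr, hρr, hsum⟩ := ENNReal.lt_iff_exists_add_pos_lt.mp hp₀'
      have hη : (0:ℝ) < (ρr:ℝ) := hρr
      obtain ⟨V, hVo, hVm, hVb⟩ := main_control hLA hLB hN p₀ hη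
      refine ⟨V, ?_, hVo, hVm⟩
      intro p hp
      show (A.prod B).rho L μ₀ p < ε
      calc (A.prod B).rho L μ₀ p
          ≤ (A.prod B).rho L μ₀ p₀ + (A.prod B).rho L p₀ p := (A.prod B).rho_triangle_s7 L μ₀ p₀ p
        _ ≤ (A.prod B).rho L μ₀ p₀ + ENNReal.ofReal (ρr:ℝ) := add_le_add_right (hVb p hp) _
        _ = (A.prod B).rho L μ₀ p₀ + (ρr : ℝ≥0∞) := by rw [ENNReal.ofReal_coe_nnreal]
        _ < ε := hsum
  · -- induces LA
    intro a
    show LA a = sInf {r : ℝ | ∃ p : A.carrier × B.carrier, p.1 = a ∧ L p = r}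
    have hbdd : BddBelow {r : ℝ | ∃ p : A.carrier × B.carrier, p.1 = a ∧ L p = r} := by
      refine ⟨0, ?_⟩
      rintro x ⟨p, _, rfl⟩
      exact apply_nonneg L p
    apply le_antisymm
    · apply le_csInf
      · obtain ⟨b, _⟩ := hN.2.2.2.1 a 1 one_pos
        exact ⟨L (a, b), (a, b), rfl, rfl⟩
      · rintro x ⟨p, hp1, rfl⟩
        rw [hLapp, ← hp1]
        exact (le_max_left _ _).trans (le_max_left _ _)
    · apply le_of_forall_pos_le_add
      intro δ hδ
      obtain ⟨b, hb⟩ := hN.2.2.2.1 a δ hδ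
      rw [max_le_iff] at hb
      have hLab : L (a, b) ≤ LA a + δ := by
        rw [hLapp]
        exact max_le (max_le (by linarith) hb.1) hb.2
      exact (csInf_le hbdd ⟨(a, b), rfl, rfl⟩).trans hLab
  · -- induces LB
    intro b
    show LB b = sInf {r : ℝ | ∃ p : A.carrier × B.carrier, p.2 = b ∧ L p = r}
    have hbdd : BddBelow {r : ℝ | ∃ p : A.carrier × B.carrier, p.2 = b ∧ L p = r} := by
      refine ⟨0, ?_⟩
      rintro x ⟨p, _, rfl⟩
      exact apply_nonneg L p
    apply le_antisymm
    · apply le_csInf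
      · obtain ⟨a, _⟩ := hN.2.2.2.2 b 1 one_pos
        exact ⟨L (a, b), (a, b), rfl, rfl⟩
      · rintro x ⟨p, hp2, rfl⟩
        rw [hLapp, ← hp2]
        exact (le_max_right _ _).trans (le_max_left _ _)
    · apply le_of_forall_pos_le_add
      intro δ hδ
      obtain ⟨a, ha⟩ := hN.2.2.2.2 b δ hδ
      rw [max_le_iff] at ha
      have hLab : L (a, b) ≤ LB b + δ := by
        rw [hLapp]
        exact max_le (max_le ha.1 (by linarith)) ha.2
      exact (csInf_le hbdd ⟨(a, b), rfl, rfl⟩).trans hLab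
end
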